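/- arXiv:2402.16826 — 13 statements merged into one kernel-verified Lean document; each statement's English description precedes it below -/
import Mathlib

section
/- Let b, c ∈ ℂ and let k ≥ 1 be an integer. Then the polynomials P_k(z) and P_{k+1}(z) satisfy the three-term recurrence (after clearing the denominator k−1+c): k(k−1+b+c)·z·(k−1+c)⁻¹·P_{k−1}(z) = (kz + k + bz + c)·P_k(z) − (k+c)·P_{k+1}(z), as an identity of polynomials in z, provided (c)_{k+1} ≠ 0 (so that P_{k−1}, P_k, P_{k+1} are all well defined and k−1+c ≠ 0). -/
open Polynomial Finset

/-- The Gauss hypergeometric polynomial `₂F₁(-k, b; 1-k-c; z)` as a polynomial in `z`. -/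
noncomputable def hypP (b c : ℂ) (k : ℕ) : Polynomial ℂ :=
  ∑ j ∈ Finset.range (k + 1),
    Polynomial.C ((ascPochhammer ℂ j).eval (-(k : ℂ)) * (ascPochhammer ℂ j).eval b /
      ((ascPochhammer ℂ j).eval (1 - (k : ℂ) - c) * (j.factorial : ℂ))) * Polynomial.X ^ j

/-- Auxiliary clean coefficient: `C(m,j) (b)_j (c)_{m-j}`. -/
noncomputable def hypAc (b c : ℂ) (m j : ℕ) : ℂ :=
  (m.choose j : ℂ) * (ascPochhammer ℂ j).eval b * (ascPochhammer ℂ (m - j)).eval c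

lemma hyp_denom_mul (c : ℂ) (m j : ℕ) (hj : j ≤ m) :
    (ascPochhammer ℂ j).eval (1 - (m : ℂ) - c) * (ascPochhammer ℂ (m - j)).eval c
      = (-1) ^ j * (ascPochhammer ℂ m).eval c := by
  have h1 : (1 - (m : ℂ) - c) = -(((m : ℂ) - 1 + c)) := by ring
  rw [h1, ascPochhammer_eval_neg_eq_descPochhammer, descPochhammer_eval_eq_ascPochhammer]
  have h2 : ((m : ℂ) - 1 + c) - j + 1 = c + ((m - j : ℕ) : ℂ) := by
    rw [Nat.cast_sub hj]; ring
  rw [h2]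
  have h3 := congrArg (Polynomial.eval c) (ascPochhammer_mul ℂ (m - j) j)
  rw [Nat.sub_add_cancel hj] at h3
  simp only [Polynomial.eval_mul, Polynomial.eval_comp, Polynomial.eval_add, Polynomial.eval_X,
    Polynomial.eval_natCast] at h3
  rw [← h3]; ring

lemma coeff_hypP (b c : ℂ) (m : ℕ) (h : (ascPochhammer ℂ m).eval c ≠ 0) (n : ℕ) :
    (hypP b c m).coeff n = hypAc b c m n / (ascPochhammer ℂ m).eval c := by
  rw [hypP, Polynomial.finset_sum_coeff]
  simp only [Polynomial.coeff_C_mul, Polynomial.coeff_X_pow, mul_ite, mul_one, mul_zero]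
  rw [Finset.sum_ite_eq]
  by_cases hn : n ∈ Finset.range (m + 1)
  · rw [if_pos hn]
    have hj : n ≤ m := by simpa [Nat.lt_succ_iff] using hn
    have hden := hyp_denom_mul c m n hj
    have hD : (ascPochhammer ℂ n).eval (1 - (m : ℂ) - c) ≠ 0 := by
      intro h0
      rw [h0, zero_mul] at hden
      exact h (by
        have h1 : ((-1 : ℂ)) ^ n * (ascPochhammer ℂ m).eval c = 0 := hden.symm
        rcases mul_eq_zero.mp h1 with h2 | h2
        · exact absurd h2 (pow_ne_zero _ (by norm_num))
        · exact h2)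
    have hC : (ascPochhammer ℂ (m - n)).eval c
        = (-1) ^ n * (ascPochhammer ℂ m).eval c / (ascPochhammer ℂ n).eval (1 - (m : ℂ) - c) := by
      rw [eq_div_iff hD]; linear_combination hden
    rw [hypAc, hC]
    rw [ascPochhammer_eval_neg_eq_descPochhammer,
      descPochhammer_eval_eq_descFactorial, Nat.descFactorial_eq_factorial_mul_choose]
    have hfac : ((n.factorial : ℂ)) ≠ 0 := Nat.cast_ne_zero.mpr n.factorial_ne_zero
    push_cast
    field_simp
  · rw [if_neg hn]
    have hm : m < n := by simpa [Nat.lt_succ_iff] using hn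
    rw [hypAc, Nat.choose_eq_zero_of_lt hm]
    simp

set_option maxHeartbeats 1600000 in
set_option maxRecDepth 20000 in
/-- The key cleared coefficient identity. -/
lemma hyp_key (b c : ℂ) (K n : ℕ) :
    ((K : ℂ) + 1) * ((K : ℂ) + b + c) * (c + (K : ℂ) + 1) * hypAc b c K n
      = ((K : ℂ) + 1 + b) * (c + (K : ℂ) + 1) * hypAc b c (K + 1) n
        + ((K : ℂ) + 1 + c) * (c + (K : ℂ) + 1) * hypAc b c (K + 1) (n + 1)
        - ((K : ℂ) + 1 + c) * hypAc b c (K + 1 + 1) (n + 1) := by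
  rcases lt_trichotomy n (K + 1) with hn | hn | hn
  · -- n ≤ K
    obtain ⟨d, rfl⟩ : ∃ d, K = n + d := ⟨K - n, by omega⟩
    simp only [hypAc,
      show n + d - n = d from by omega,
      show n + d + 1 - n = d + 1 from by omega,
      show n + d + 1 - (n + 1) = d from by omega,
      show n + d + 1 + 1 - (n + 1) = d + 1 from by omega]
    simp only [ascPochhammer_succ_eval]
    have h4 : ((n : ℂ) + 1) ≠ 0 := by exact_mod_cast n.succ_ne_zero
    have h5 : ((d : ℂ) + 1) ≠ 0 := by exact_mod_cast d.succ_ne_zero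
    have hA := congrArg (fun t : ℕ => (t : ℂ)) (Nat.add_one_mul_choose_eq (n + d) n)
    have hB := congrArg (fun t : ℕ => (t : ℂ)) (Nat.add_one_mul_choose_eq (n + d) d)
    have hC := congrArg (fun t : ℕ => (t : ℂ)) (Nat.add_one_mul_choose_eq (n + d + 1) n)
    have hsym1 : (n + d).choose d = (n + d).choose n := by
      rw [Nat.add_comm]; exact Nat.choose_symm_add
    have hsym2 : (n + d + 1).choose (d + 1) = (n + d + 1).choose n := by
      rw [show n + d + 1 = d + 1 + n from by omega]; exact Nat.choose_symm_add
    rw [hsym1, hsym2] at hB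
    push_cast at hA hB hC ⊢
    apply mul_left_cancel₀ (mul_ne_zero h4 h5)
    set Bn := (ascPochhammer ℂ n).eval b
    set Cd := (ascPochhammer ℂ d).eval c
    linear_combination
        (((n : ℂ) + d + 1 + c) * (c + ((n : ℂ) + d) + 1) * ((d : ℂ) + 1) * (Bn * (b + n) * Cd)) * hA
      + ((((n : ℂ) + d + 1 + b) * (c + ((n : ℂ) + d) + 1) * ((n : ℂ) + 1) * (Bn * Cd * (c + d)))
          - (((n : ℂ) + d + 1 + c) * ((n : ℂ) + d + 2) * (Bn * (b + n) * Cd * (c + d)))) * hB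
      - (((n : ℂ) + d + 1 + c) * ((d : ℂ) + 1) * (Bn * (b + n) * Cd * (c + d))) * hC
  · -- n = K + 1
    subst hn
    simp only [hypAc, Nat.choose_self, Nat.choose_succ_self, Nat.sub_self,
      Nat.choose_eq_zero_of_lt (show K < K + 1 from by omega),
      Nat.choose_eq_zero_of_lt (show K + 1 < K + 1 + 1 from by omega),
      ascPochhammer_zero, Polynomial.eval_one, Nat.cast_zero, Nat.cast_one]
    rw [show (ascPochhammer ℂ (K + 1 + 1)).eval b
        = (ascPochhammer ℂ (K + 1)).eval b * (b + ((K : ℂ) + 1)) from by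
      rw [ascPochhammer_succ_eval]; push_cast; ring]
    ring
  · -- n > K + 1
    have c1 : K < n := by omega
    have c2 : K + 1 < n := by omega
    have c3 : K + 1 < n + 1 := by omega
    have c4 : K + 1 + 1 < n + 1 := by omega
    simp only [hypAc, Nat.choose_eq_zero_of_lt c1, Nat.choose_eq_zero_of_lt c2,
      Nat.choose_eq_zero_of_lt c3, Nat.choose_eq_zero_of_lt c4]
    simp

lemma hyp_final (u b c x y z w e : ℂ) (he : e ≠ 0) (h1 : c + u ≠ 0) (h2 : c + u + 1 ≠ 0)
    (hkey : (u + 1) * (u + b + c) * (c + u + 1) * x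
      = (u + 1 + b) * (c + u + 1) * y + (u + 1 + c) * (c + u + 1) * z - (u + 1 + c) * w) :
    (u + 1) * (u + b + c) / (c + u) * (x / e)
      = (u + 1 + b) * (y / (e * (c + u))) + (u + 1 + c) * (z / (e * (c + u)))
        - (u + 1 + c) * (w / (e * ((c + u) * (c + u + 1)))) := by
  field_simp
  linear_combination hkey

/-- The three-term contiguous recurrence for the hypergeometric polynomials `P k`. -/
theorem stmt_0 (b c : ℂ) (k : ℕ) (hk : 1 ≤ k)
    (hc : (ascPochhammer ℂ (k + 1)).eval c ≠ 0) :
    Polynomial.C ((k : ℂ) * ((k : ℂ) - 1 + b + c) / ((k : ℂ) - 1 + c)) * Polynomial.X *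
        hypP b c (k - 1)
      = (Polynomial.C ((k : ℂ) + b) * Polynomial.X + Polynomial.C ((k : ℂ) + c)) * hypP b c k
        - Polynomial.C ((k : ℂ) + c) * hypP b c (k + 1) := by
  obtain ⟨K, rfl⟩ : ∃ K, k = K + 1 := ⟨k - 1, by omega⟩
  have e2 : (ascPochhammer ℂ (K + 1 + 1)).eval c
      = (ascPochhammer ℂ K).eval c * ((c + (K : ℂ)) * (c + (K : ℂ) + 1)) := by
    simp only [ascPochhammer_succ_eval]; push_cast; ring
  have e1 : (ascPochhammer ℂ (K + 1)).eval c
      = (ascPochhammer ℂ K).eval c * (c + (K : ℂ)) := by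
    rw [ascPochhammer_succ_eval]
  have hprod : (ascPochhammer ℂ K).eval c * ((c + (K : ℂ)) * (c + (K : ℂ) + 1)) ≠ 0 := by
    rw [← e2]; exact hc
  have hK : (ascPochhammer ℂ K).eval c ≠ 0 := fun h => hprod (by rw [h, zero_mul])
  have hcK : (c + (K : ℂ)) ≠ 0 := fun h => hprod (by rw [h, zero_mul, mul_zero])
  have hcK1 : (c + (K : ℂ) + 1) ≠ 0 := fun h => hprod (by rw [h, mul_zero, mul_zero])
  have hK1 : (ascPochhammer ℂ (K + 1)).eval c ≠ 0 := by
    rw [e1]; exact mul_ne_zero hK hcK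
  rw [Nat.add_sub_cancel, mul_assoc]
  rw [show (Polynomial.C (((K + 1 : ℕ) : ℂ) + b) * Polynomial.X
          + Polynomial.C (((K + 1 : ℕ) : ℂ) + c)) * hypP b c (K + 1)
      = Polynomial.C (((K + 1 : ℕ) : ℂ) + b) * (Polynomial.X * hypP b c (K + 1))
        + Polynomial.C (((K + 1 : ℕ) : ℂ) + c) * hypP b c (K + 1) from by ring]
  rw [show (((K + 1 : ℕ) : ℂ)) = (K : ℂ) + 1 from by push_cast; ring]
  ext n
  simp only [Polynomial.coeff_add, Polynomial.coeff_sub, Polynomial.coeff_C_mul]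
  rcases n with _ | n
  · simp only [Polynomial.mul_coeff_zero, Polynomial.coeff_X_zero, zero_mul, mul_zero,
      coeff_hypP b c (K + 1) hK1, coeff_hypP b c (K + 1 + 1) hc]
    simp only [hypAc, Nat.choose_zero_right, Nat.sub_zero, ascPochhammer_zero,
      Polynomial.eval_one, Nat.cast_one, one_mul]
    rw [e2, e1]
    field_simp
    ring
  · rw [Polynomial.coeff_X_mul, Polynomial.coeff_X_mul]
    rw [coeff_hypP b c K hK n, coeff_hypP b c (K + 1) hK1 n, coeff_hypP b c (K + 1) hK1 (n + 1),
      coeff_hypP b c (K + 1 + 1) hc (n + 1)]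
    rw [e2, e1]
    rw [show (K : ℂ) + 1 - 1 + b + c = (K : ℂ) + b + c from by ring,
      show (K : ℂ) + 1 - 1 + c = c + (K : ℂ) from by ring]
    exact hyp_final (K : ℂ) b c _ _ _ _ _ hK hcK hcK1 (hyp_key b c K n)
end

section
/- Let b, c ∈ ℂ and let k ≥ 1 be an integer such that (b)_k ≠ 0, (c)_k ≠ 0, and (b+c)_k ≠ 0. Then the polynomials P_k(z) and P_{k−1}(z) have no common root in ℂ. -/
open Polynomial Finset

lemma poch_succ_left_eval (n : ℕ) (x : ℂ) :
    (ascPochhammer ℂ (n+1)).eval x = x * (ascPochhammer ℂ n).eval (x+1) := by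
  rw [ascPochhammer_succ_left, eval_mul, eval_X, eval_comp, eval_add, eval_X, eval_one]

lemma poch_shift (n : ℕ) (x : ℂ) :
    x * (ascPochhammer ℂ n).eval (x+1) = (ascPochhammer ℂ n).eval x * (x + n) := by
  rw [← poch_succ_left_eval, ascPochhammer_succ_eval]

lemma poch_factor_ne (x : ℂ) : ∀ k : ℕ, (ascPochhammer ℂ k).eval x ≠ 0 →
    ∀ i < k, x + i ≠ 0 := by
  intro k
  induction k with
  | zero => intro _ i hi; omega
  | succ n ih =>
    rw [ascPochhammer_succ_eval]
    intro h i hi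
    rcases Nat.lt_succ_iff_lt_or_eq.mp hi with h' | h'
    · exact ih (left_ne_zero_of_mul h) i h'
    · subst h'; exact right_ne_zero_of_mul h

lemma poch_ne_of_forall (x : ℂ) : ∀ j : ℕ, (∀ i < j, x + i ≠ 0) →
    (ascPochhammer ℂ j).eval x ≠ 0 := by
  intro j
  induction j with
  | zero => intro _; simp
  | succ n ih =>
    intro h
    rw [ascPochhammer_succ_eval]
    exact mul_ne_zero (ih fun i hi => h i (Nat.lt_succ_of_lt hi)) (h n (Nat.lt_succ_self n))

noncomputable def qc (b c : ℂ) (m j : ℕ) : ℂ :=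
  (ascPochhammer ℂ j).eval (-(m : ℂ)) * (ascPochhammer ℂ j).eval b /
      ((ascPochhammer ℂ j).eval (1 - (m : ℂ) - c) * (j.factorial : ℂ))

lemma hypP_coeff (b c : ℂ) (m j : ℕ) :
    (hypP b c m).coeff j = if j ≤ m then qc b c m j else 0 := by
  rw [hypP, finset_sum_coeff]
  simp only [coeff_C_mul, coeff_X_pow, mul_ite, mul_one, mul_zero]
  rw [Finset.sum_ite_eq (Finset.range (m+1)) j]
  simp [Nat.lt_succ_iff, qc]

lemma hypP_eval_zero (b c : ℂ) (m : ℕ) : (hypP b c m).eval 0 = 1 := by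
  rw [hypP, eval_finset_sum]
  rw [Finset.sum_eq_single 0]
  · simp
  · intro i _ hi
    simp [zero_pow hi]
  · simp

lemma frac_split (u v w t A B C D : ℂ) :
    (u * A) * (v * B) / ((w * C) * (t * D)) = (u * v / (w * t)) * ((A * B) / (C * D)) := by
  rw [div_mul_div_comm, show (u*A)*(v*B) = u*v*(A*B) from by ring,
    show (w*C)*(t*D) = (w*t)*(C*D) from by ring]

lemma key_alg4 (K e u v w t p r : ℂ) (c : ℂ)
    (hw : w ≠ 0) (ht : t ≠ 0) (h1 : 1 - K ≠ 0) (h4 : 2 - K - c + e ≠ 0)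
    (hr0 : r ≠ 0)
    (hp : (1 - K) * p = u * ((1 - K) + e)) (hr : (2 - K - c) * r = w * ((2 - K - c) + e)) :
    p * v / (r * t) = (u * v / (w * t)) *
      ((((1 - K) + e) * (2 - K - c)) / ((1 - K) * ((2 - K - c) + e))) := by
  rw [div_mul_div_comm]
  rw [div_eq_div_iff (mul_ne_zero hr0 ht)
    (mul_ne_zero (mul_ne_zero hw ht) (mul_ne_zero h1 h4))]
  linear_combination (v * t * w * ((2-K-c)+e)) * hp - (u * v * t * ((1-K)+e)) * hr

set_option maxHeartbeats 1000000 in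
lemma scal (K e b c : ℂ)
    (he : e + 1 ≠ 0) (h1 : 1 - K ≠ 0)
    (h2 : 1 - K - c ≠ 0) (h3 : 2 - K - c ≠ 0) (h4 : 2 - K - c + e ≠ 0) :
    (1-K-c)*(2-K-c) * ( (((1-K)+e)*(b+e))/(((2-K-c)+e)*(e+1))
        - ((-K)*(b+e))/((1-K-c)*(e+1)) )
      + (2-K-c)*(1-K-b)
      = (1-K)*(2-K-c-b) * ((((1-K)+e)*(2-K-c)) / ((1-K)*((2-K-c)+e))) := by
  field_simp
  ring

lemma scal2 (K b c : ℂ) (hK : K ≠ 0) (h2 : 1 - K - c ≠ 0) :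
    (1-K-c)*(2-K-c) * (((-K)*(b+(K-1)))/((1-K-c)*K)) = (2-K-c)*(1-K-b) := by
  field_simp
  ring

set_option maxHeartbeats 1000000 in
lemma recur (b c : ℂ) (k : ℕ) (hk : 2 ≤ k) (hc' : ∀ i : ℕ, i < k → c + (i : ℂ) ≠ 0) :
    C ((1 - (k:ℂ) - c) * (2 - (k:ℂ) - c)) * (hypP b c (k-1) - hypP b c k)
      + C ((2 - (k:ℂ) - c) * (1 - (k:ℂ) - b)) * (hypP b c (k-1) * X)
      = C ((1 - (k:ℂ)) * (2 - (k:ℂ) - c - b)) * (hypP b c (k-2) * X) := by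
  set K := (k : ℂ) with hKdef
  have hK1 : ((k - 1 : ℕ) : ℂ) = K - 1 := by
    rw [Nat.cast_sub (by omega)]; norm_num; exact hKdef.symm
  have hK2 : ((k - 2 : ℕ) : ℂ) = K - 2 := by
    rw [Nat.cast_sub (by omega)]; norm_num; exact hKdef.symm
  have key : ∀ d : ℕ, d < k → c + (d : ℂ) ≠ 0 := hc'
  have hKne : K ≠ 0 := by
    simp only [hKdef, Ne, Nat.cast_eq_zero]; omega
  have h1 : (1 : ℂ) - K ≠ 0 := by
    rw [sub_ne_zero, hKdef]
    exact_mod_cast (by omega : (1 : ℕ) ≠ k)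
  have h2 : (1 : ℂ) - K - c ≠ 0 := by
    intro h
    exact key (k - 1) (by omega) (by rw [hK1]; linear_combination -h)
  have h3 : (2 : ℂ) - K - c ≠ 0 := by
    intro h
    exact key (k - 2) (by omega) (by rw [hK2]; linear_combination -h)
  have c1 : -((k - 1 : ℕ) : ℂ) = 1 - K := by rw [hK1]; ring
  have c2 : (1 : ℂ) - ((k - 1 : ℕ) : ℂ) - c = 2 - K - c := by rw [hK1]; ring
  have c3 : -((k - 2 : ℕ) : ℂ) = 2 - K := by rw [hK2]; ring
  have c4 : (1 : ℂ) - ((k - 2 : ℕ) : ℂ) - c = 3 - K - c := by rw [hK2]; ring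
  ext j
  simp only [coeff_add, coeff_C_mul, coeff_sub]
  rcases j with _ | i
  · rw [coeff_mul_X_zero, coeff_mul_X_zero]
    simp [hypP_coeff, qc]
  rw [coeff_mul_X, coeff_mul_X, hypP_coeff, hypP_coeff, hypP_coeff, hypP_coeff]
  have ht : ((i.factorial : ℕ) : ℂ) ≠ 0 := Nat.cast_ne_zero.mpr i.factorial_ne_zero
  have he : (i : ℂ) + 1 ≠ 0 := Nat.cast_add_one_ne_zero i
  by_cases hle : i + 1 ≤ k - 1
  · -- generic case
    rw [if_pos hle, if_pos (by omega), if_pos (by omega), if_pos (by omega)]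
    have h4 : (2 : ℂ) - K - c + (i : ℂ) ≠ 0 := by
      intro h
      apply key (k - 2 - i) (by omega)
      rw [Nat.cast_sub (by omega), hK2]
      linear_combination -h
    have hw : (ascPochhammer ℂ i).eval (2 - K - c) ≠ 0 := by
      apply poch_ne_of_forall
      intro m hm h
      apply key (k - 2 - m) (by omega)
      rw [Nat.cast_sub (by omega), hK2]
      linear_combination -h
    have hp : (1 - K) * (ascPochhammer ℂ i).eval (2 - K) =
        (ascPochhammer ℂ i).eval (1 - K) * ((1 - K) + (i : ℂ)) := by
      have := poch_shift i (1 - K)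
      rw [show (1 : ℂ) - K + 1 = 2 - K from by ring] at this
      exact this
    have hr : (2 - K - c) * (ascPochhammer ℂ i).eval (3 - K - c) =
        (ascPochhammer ℂ i).eval (2 - K - c) * ((2 - K - c) + (i : ℂ)) := by
      have := poch_shift i (2 - K - c)
      rw [show (2 : ℂ) - K - c + 1 = 3 - K - c from by ring] at this
      exact this
    have hr0 : (ascPochhammer ℂ i).eval (3 - K - c) ≠ 0 := by
      intro h
      rw [h, mul_zero] at hr
      exact mul_ne_zero hw h4 hr.symm
    have E1 : qc b c (k - 1) (i + 1) =
        ((ascPochhammer ℂ i).eval (1 - K) * (ascPochhammer ℂ i).eval b /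
          ((ascPochhammer ℂ i).eval (2 - K - c) * (i.factorial : ℂ))) *
        ((((1 - K) + (i : ℂ)) * (b + (i : ℂ))) /
          ((((2 - K - c) + (i : ℂ))) * ((i : ℂ) + 1))) := by
      simp only [qc, c1, c2, ascPochhammer_succ_eval, Nat.factorial_succ]
      push_cast
      rw [div_mul_div_comm]
      congr 1 <;> ring
    have E2 : qc b c k (i + 1) =
        ((ascPochhammer ℂ i).eval (1 - K) * (ascPochhammer ℂ i).eval b /
          ((ascPochhammer ℂ i).eval (2 - K - c) * (i.factorial : ℂ))) *
        ((((-K) * (b + (i : ℂ)))) / ((1 - K - c) * ((i : ℂ) + 1))) := by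
      simp only [qc]
      rw [poch_succ_left_eval i (-K), poch_succ_left_eval i (1 - K - c),
        show -K + 1 = 1 - K from by ring, show (1 : ℂ) - K - c + 1 = 2 - K - c from by ring,
        ascPochhammer_succ_eval, Nat.factorial_succ]
      push_cast
      rw [div_mul_div_comm]
      congr 1 <;> ring
    have E3 : qc b c (k - 1) i =
        (ascPochhammer ℂ i).eval (1 - K) * (ascPochhammer ℂ i).eval b /
          ((ascPochhammer ℂ i).eval (2 - K - c) * (i.factorial : ℂ)) := by
      simp only [qc, c1, c2]
    have E4 : qc b c (k - 2) i =
        ((ascPochhammer ℂ i).eval (1 - K) * (ascPochhammer ℂ i).eval b /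
          ((ascPochhammer ℂ i).eval (2 - K - c) * (i.factorial : ℂ))) *
        ((((1 - K) + (i : ℂ)) * (2 - K - c)) / ((1 - K) * ((2 - K - c) + (i : ℂ)))) := by
      simp only [qc, c3, c4]
      exact key_alg4 K (i : ℂ) _ _ _ _ _ _ c hw ht h1 h4 hr0 hp hr
    rw [E1, E2, E3, E4]
    linear_combination ((ascPochhammer ℂ i).eval (1 - K) * (ascPochhammer ℂ i).eval b /
          ((ascPochhammer ℂ i).eval (2 - K - c) * (i.factorial : ℂ))) *
      scal K (i : ℂ) b c he h1 h2 h3 h4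
  · by_cases heq : i + 1 = k
    · rw [if_neg (by omega), if_pos (by omega), if_pos (by omega), if_neg (by omega)]
      have hei : (i : ℂ) = K - 1 := by
        rw [show i = k - 1 from by omega, hK1]
      have E2 : qc b c k (i + 1) =
          ((ascPochhammer ℂ i).eval (1 - K) * (ascPochhammer ℂ i).eval b /
            ((ascPochhammer ℂ i).eval (2 - K - c) * (i.factorial : ℂ))) *
          ((((-K) * (b + (i : ℂ)))) / ((1 - K - c) * ((i : ℂ) + 1))) := by
        simp only [qc]
        rw [poch_succ_left_eval i (-K), poch_succ_left_eval i (1 - K - c),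
          show -K + 1 = 1 - K from by ring, show (1 : ℂ) - K - c + 1 = 2 - K - c from by ring,
          ascPochhammer_succ_eval, Nat.factorial_succ]
        push_cast
        rw [div_mul_div_comm]
        congr 1 <;> ring
      have E3 : qc b c (k - 1) i =
          (ascPochhammer ℂ i).eval (1 - K) * (ascPochhammer ℂ i).eval b /
            ((ascPochhammer ℂ i).eval (2 - K - c) * (i.factorial : ℂ)) := by
        simp only [qc, c1, c2]
      rw [E2, E3, hei]
      linear_combination (-((ascPochhammer ℂ i).eval (1 - K) * (ascPochhammer ℂ i).eval b /
          ((ascPochhammer ℂ i).eval (2 - K - c) * (i.factorial : ℂ)))) * scal2 K b c hKne h2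
    · rw [if_neg (by omega), if_neg (by omega), if_neg (by omega), if_neg (by omega)]
      ring

lemma hypP_zero_eval (b c : ℂ) (z : ℂ) : (hypP b c 0).eval z = 1 := by
  simp [hypP]

lemma main_aux (b c : ℂ) : ∀ k : ℕ, 1 ≤ k → (∀ i : ℕ, i < k → c + (i : ℂ) ≠ 0) →
    (∀ i : ℕ, i < k → (b + c) + (i : ℂ) ≠ 0) →
    ∀ z : ℂ, ¬ ((hypP b c k).eval z = 0 ∧ (hypP b c (k - 1)).eval z = 0) := by
  intro k
  induction k using Nat.strong_induction_on with
  | _ k ih =>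
    rintro hk hc' hbc' z ⟨h1, h2⟩
    have hz : z ≠ 0 := by
      intro h
      rw [h, hypP_eval_zero] at h1
      exact one_ne_zero h1
    rcases eq_or_lt_of_le hk with hk1 | hk2
    · rw [← hk1] at h2
      norm_num [hypP_zero_eval] at h2
    · -- 2 ≤ k
      have hk2 : 2 ≤ k := hk2
      have heval := congrArg (Polynomial.eval z) (recur b c k hk2 hc')
      simp only [eval_add, eval_mul, eval_C, eval_X, eval_sub, h1, h2, sub_zero, zero_sub,
        mul_zero, zero_mul, neg_zero, add_zero, zero_add] at heval
      have hg1 : (1 : ℂ) - (k : ℂ) ≠ 0 := by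
        rw [sub_ne_zero]
        exact_mod_cast (by omega : (1 : ℕ) ≠ k)
      have hg2 : (2 : ℂ) - (k : ℂ) - c - b ≠ 0 := by
        intro h
        apply hbc' (k - 2) (by omega)
        rw [Nat.cast_sub (by omega)]
        push_cast
        linear_combination -h
      have h3 : (hypP b c (k - 2)).eval z = 0 := by
        rcases mul_eq_zero.mp heval.symm with h | h
        · exact absurd h (mul_ne_zero hg1 hg2)
        · rcases mul_eq_zero.mp h with h | h
          · exact h
          · exact absurd h hz
      have : (k - 1) - 1 = k - 2 := by omega
      exact ih (k - 1) (by omega) (by omega)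
        (fun i hi => hc' i (by omega)) (fun i hi => hbc' i (by omega)) z
        ⟨h2, by rw [this]; exact h3⟩

/-- `P k` and `P (k-1)` have no common root. -/
theorem stmt_1 (b c : ℂ) (k : ℕ) (hk : 1 ≤ k)
    (hb : (ascPochhammer ℂ k).eval b ≠ 0)
    (hc : (ascPochhammer ℂ k).eval c ≠ 0)
    (hbc : (ascPochhammer ℂ k).eval (b + c) ≠ 0) :
    ∀ z : ℂ, ¬ ((hypP b c k).eval z = 0 ∧ (hypP b c (k - 1)).eval z = 0) :=
  main_aux b c k hk (poch_factor_ne c k hc) (poch_factor_ne (b + c) k hbc)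
end

section
/- Let b, c ∈ ℂ and let k ≥ 1 be an integer such that (b)_k ≠ 0, (c)_k ≠ 0, and (b+c)_k ≠ 0. Then the polynomial P_k(z) has degree exactly k and has k distinct roots in ℂ (i.e., P_k is separable: it has no multiple roots). -/
open Polynomial Finset

namespace HypAux

noncomputable def a (b c : ℂ) (k j : ℕ) : ℂ :=
  (ascPochhammer ℂ j).eval (-(k : ℂ)) * (ascPochhammer ℂ j).eval b /
      ((ascPochhammer ℂ j).eval (1 - (k : ℂ) - c) * (j.factorial : ℂ))

lemma a_eq_zero (b c : ℂ) {k j : ℕ} (h : k < j) : a b c k j = 0 := by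
  rw [a, ascPochhammer_eval_neg_coe_nat_of_lt h, zero_mul, zero_div]

lemma coeff_hypP (b c : ℂ) (k n : ℕ) : (hypP b c k).coeff n = a b c k n := by
  rw [hypP, finset_sum_coeff]
  simp only [coeff_C_mul, coeff_X_pow, mul_ite, mul_one, mul_zero]
  simp only [eq_comm (a := n)]
  rw [Finset.sum_ite_eq']
  split_ifs with h
  · rfl
  · rw [Finset.mem_range, not_lt] at h
    exact (a_eq_zero b c (by omega)).symm

lemma den_ne (c : ℂ) {k : ℕ} (hc : (ascPochhammer ℂ k).eval c ≠ 0) {j : ℕ} (hj : j ≤ k) :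
    (ascPochhammer ℂ j).eval (1 - (k : ℂ) - c) ≠ 0 := by
  intro h
  rw [ascPochhammer_eval_eq_zero_iff] at h
  obtain ⟨i, hi, hie⟩ := h
  apply hc
  rw [ascPochhammer_eval_eq_zero_iff]
  refine ⟨k - 1 - i, by omega, ?_⟩
  have h1 : 1 ≤ k := by omega
  have h2 : i ≤ k - 1 := by omega
  push_cast [Nat.cast_sub h2, Nat.cast_sub h1]
  have : (i : ℂ) = (k : ℂ) + c - 1 := by rw [hie]; ring
  rw [this]; ring

lemma recur (b c : ℂ) {k : ℕ} (hc : (ascPochhammer ℂ k).eval c ≠ 0) (n : ℕ) :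
    ((n : ℂ) + 1) * ((n : ℂ) + (1 - (k : ℂ) - c)) * a b c k (n + 1)
      = ((n : ℂ) + (-(k : ℂ))) * ((n : ℂ) + b) * a b c k n := by
  rcases lt_trichotomy n k with h | he | h
  · have d1 : (ascPochhammer ℂ n).eval (1 - (k : ℂ) - c) ≠ 0 := den_ne c hc (by omega)
    have d2 : (1 - (k : ℂ) - c + n) ≠ 0 := by
      have := den_ne c hc (show n + 1 ≤ k by omega)
      rw [ascPochhammer_succ_eval] at this
      exact fun h' => this (by rw [h', mul_zero])
    have d3 : (n.factorial : ℂ) ≠ 0 := Nat.cast_ne_zero.mpr n.factorial_ne_zero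
    have d4 : ((n : ℂ) + 1) ≠ 0 := by
      exact_mod_cast Nat.cast_ne_zero (R := ℂ).mpr (Nat.succ_ne_zero n)
    rw [a, a, ascPochhammer_succ_eval, ascPochhammer_succ_eval, ascPochhammer_succ_eval,
      Nat.factorial_succ]
    push_cast
    field_simp
    ring
  · subst he
    rw [a_eq_zero b c (by omega)]
    rw [show ((n : ℂ) + -(n : ℂ)) = 0 by ring]
    ring
  · rw [a_eq_zero b c (by omega), a_eq_zero b c (by omega)]
    ring

lemma ode_of_recur (p : Polynomial ℂ) (α β γ : ℂ)
    (h : ∀ n : ℕ, ((n : ℂ) + 1) * ((n : ℂ) + γ) * p.coeff (n + 1)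
      = ((n : ℂ) + α) * ((n : ℂ) + β) * p.coeff n) :
    X * derivative (derivative p) - X * (X * derivative (derivative p))
      + C γ * derivative p - C (α + β + 1) * (X * derivative p) - C (α * β) * p = 0 := by
  ext n
  match n with
  | 0 =>
    simp only [coeff_sub, coeff_add, mul_coeff_zero, coeff_X_zero, zero_mul, coeff_C_mul, coeff_C,
      coeff_derivative, coeff_zero]
    have := h 0
    push_cast at this ⊢
    linear_combination this
  | 1 =>
    simp only [coeff_sub, coeff_add, coeff_X_mul, mul_coeff_zero, coeff_X_zero, zero_mul,
      coeff_C_mul, coeff_C, coeff_derivative, coeff_zero]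
    have := h 1
    push_cast at this ⊢
    linear_combination this
  | (n + 2) =>
    simp only [coeff_sub, coeff_add, coeff_X_mul, coeff_C_mul, coeff_derivative, coeff_zero]
    have := h (n + 2)
    push_cast at this ⊢
    linear_combination this

lemma mult_le_one (p : Polynomial ℂ) (α β γ : ℂ)
    (hode : X * derivative (derivative p) - X * (X * derivative (derivative p))
      + C γ * derivative p - C (α + β + 1) * (X * derivative p) - C (α * β) * p = 0)
    (hp : p ≠ 0) {z : ℂ} (h0 : z ≠ 0) (h1 : z ≠ 1) : p.rootMultiplicity z ≤ 1 := by
  by_contra hm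
  push_neg at hm
  obtain ⟨m', hm'⟩ : ∃ m', p.rootMultiplicity z = m' + 2 := ⟨p.rootMultiplicity z - 2, by omega⟩
  set u : Polynomial ℂ := p /ₘ (X - C z) ^ p.rootMultiplicity z with hu_def
  have hu : u.eval z ≠ 0 := eval_divByMonic_pow_rootMultiplicity_ne_zero z hp
  have hfac : (X - C z) ^ (m' + 2) * u = p := by
    rw [← hm']; exact pow_mul_divByMonic_rootMultiplicity_eq p z
  set v1 : Polynomial ℂ := ((m' : Polynomial ℂ) + 2) * u + (X - C z) * derivative u with hv1
  set v2 : Polynomial ℂ := ((m' : Polynomial ℂ) + 2) * ((m' : Polynomial ℂ) + 1) * u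
    + (2 * ((m' : Polynomial ℂ) + 2)) * ((X - C z) * derivative u)
    + (X - C z) ^ 2 * derivative (derivative u) with hv2
  have hd1 : derivative p = (X - C z) ^ (m' + 1) * v1 := by
    rw [← hfac, derivative_mul, derivative_pow, hv1]
    simp only [derivative_sub, derivative_X, derivative_C, sub_zero, mul_one,
      Nat.add_sub_cancel, C_eq_natCast]
    push_cast
    ring
  have hd2 : derivative (derivative p) = (X - C z) ^ m' * v2 := by
    rw [hd1, derivative_mul, derivative_pow, hv2, hv1]
    simp only [derivative_sub, derivative_X, derivative_C, sub_zero, mul_one,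
      Nat.add_sub_cancel, derivative_add, derivative_mul, derivative_natCast,
      derivative_ofNat, zero_mul, zero_add, add_zero, C_eq_natCast]
    push_cast
    ring
  set W : Polynomial ℂ := X * v2 - X * (X * v2) + C γ * ((X - C z) * v1)
    - C (α + β + 1) * (X * ((X - C z) * v1)) - C (α * β) * ((X - C z) ^ 2 * u) with hW
  have hEW : (X - C z) ^ m' * W = 0 := by
    rw [hW, ← hode, hd2, hd1, ← hfac]
    ring
  have hW0 : W = 0 := by
    rcases mul_eq_zero.mp hEW with h | h
    · exact absurd h (pow_ne_zero _ (X_sub_C_ne_zero z))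
    · exact h
  have hWz := congrArg (eval z) hW0
  rw [hW] at hWz
  simp only [eval_sub, eval_add, eval_mul, eval_pow, eval_X, eval_C, eval_zero, sub_self,
    zero_mul, mul_zero, add_zero, eval_natCast, eval_ofNat] at hWz
  have hv2z : v2.eval z = ((m' : ℂ) + 2) * ((m' : ℂ) + 1) * u.eval z := by
    rw [hv2]
    simp [sub_self]
  rw [hv2z] at hWz
  have h2 : ((m' : ℂ) + 2) ≠ 0 := by
    have : ((m' + 2 : ℕ) : ℂ) ≠ 0 := Nat.cast_ne_zero.mpr (by omega)
    push_cast at this; exact this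
  have h3 : ((m' : ℂ) + 1) ≠ 0 := by
    have : ((m' + 1 : ℕ) : ℂ) ≠ 0 := Nat.cast_ne_zero.mpr (by omega)
    push_cast at this; exact this
  have hz1 : (1 : ℂ) - z ≠ 0 := fun h => h1 (by linear_combination -h)
  have key : z * (1 - z) * (((m' : ℂ) + 2) * ((m' : ℂ) + 1)) * u.eval z = 0 := by
    linear_combination hWz
  exact (mul_ne_zero (mul_ne_zero (mul_ne_zero h0 hz1) (mul_ne_zero h2 h3)) hu) key

lemma asc_vdm (x y : ℂ) : ∀ k : ℕ, (ascPochhammer ℂ k).eval (x + y)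
    = ∑ ij ∈ Finset.HasAntidiagonal.antidiagonal k, (k.choose ij.1 : ℂ) *
      ((ascPochhammer ℂ ij.1).eval x * (ascPochhammer ℂ ij.2).eval y)
  | 0 => by simp
  | (k + 1) => by
    rw [ascPochhammer_succ_eval, asc_vdm x y k,
      Finset.sum_antidiagonal_choose_succ_mul
        (fun i j => (ascPochhammer ℂ i).eval x * (ascPochhammer ℂ j).eval y) k,
      Finset.sum_mul, ← Finset.sum_add_distrib]
    refine Finset.sum_congr rfl fun ij hij => ?_
    rw [Finset.HasAntidiagonal.mem_antidiagonal] at hij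
    have hsym : (k.choose ij.2 : ℂ) = (k.choose ij.1 : ℂ) := by
      rw [Nat.choose_symm_of_eq_add hij.symm]
    have hcast : (ij.1 : ℂ) + (ij.2 : ℂ) = (k : ℂ) := by
      exact_mod_cast congrArg (Nat.cast (R := ℂ)) hij
    rw [hsym, ascPochhammer_succ_eval, ascPochhammer_succ_eval]
    linear_combination (-(k.choose ij.1 : ℂ) * (ascPochhammer ℂ ij.1).eval x *
      (ascPochhammer ℂ ij.2).eval y) * hcast

lemma keyB (c : ℂ) (k : ℕ) : ∀ j : ℕ, j ≤ k →
    (ascPochhammer ℂ k).eval c = (-1) ^ j * (ascPochhammer ℂ j).eval (1 - (k : ℂ) - c)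
      * (ascPochhammer ℂ (k - j)).eval c
  | 0, _ => by simp
  | (j + 1), hj => by
    have hjk : j ≤ k := by omega
    have ih := keyB c k j hjk
    have hsub : k - j = (k - (j + 1)) + 1 := by omega
    rw [ascPochhammer_succ_eval]
    rw [hsub, ascPochhammer_succ_eval] at ih
    have hcast : ((k - (j + 1) : ℕ) : ℂ) = (k : ℂ) - (j : ℂ) - 1 := by
      push_cast [Nat.cast_sub hj]
      ring
    rw [hcast] at ih
    rw [ih]
    ring

lemma a_mul (b c : ℂ) {k : ℕ} (hc : (ascPochhammer ℂ k).eval c ≠ 0) {j : ℕ} (hj : j ≤ k) :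
    a b c k j * (ascPochhammer ℂ k).eval c
      = (k.choose j : ℂ) * ((ascPochhammer ℂ j).eval b * (ascPochhammer ℂ (k - j)).eval c) := by
  have hA : (ascPochhammer ℂ j).eval (-(k : ℂ)) = (-1) ^ j * (k.descFactorial j : ℂ) := by
    rw [ascPochhammer_eval_neg_eq_descPochhammer, descPochhammer_eval_eq_descFactorial]
  have hD : (k.descFactorial j : ℂ) = (j.factorial : ℂ) * (k.choose j : ℂ) := by
    rw [Nat.descFactorial_eq_factorial_mul_choose]; push_cast; ring
  have hden := den_ne c hc hj
  have hfac : (j.factorial : ℂ) ≠ 0 := Nat.cast_ne_zero.mpr j.factorial_ne_zero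
  have hneg : ((-1 : ℂ)) ^ j * (-1) ^ j = 1 := by rw [← mul_pow]; norm_num
  rw [a, keyB c k j hj, hA, hD]
  field_simp
  linear_combination ((k.choose j : ℂ) * (ascPochhammer ℂ j).eval b *
    (ascPochhammer ℂ (k - j)).eval c) * hneg

lemma eval_one_mul (b c : ℂ) (k : ℕ) (hc : (ascPochhammer ℂ k).eval c ≠ 0) :
    (hypP b c k).eval 1 * (ascPochhammer ℂ k).eval c = (ascPochhammer ℂ k).eval (b + c) := by
  rw [hypP]
  simp only [eval_finset_sum, eval_mul, eval_C, eval_pow, eval_X, one_pow, mul_one]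
  rw [Finset.sum_mul, asc_vdm b c k, Finset.Nat.sum_antidiagonal_eq_sum_range_succ_mk]
  refine Finset.sum_congr rfl fun j hj => ?_
  rw [Finset.mem_range] at hj
  exact a_mul b c hc (show j ≤ k by omega)

end HypAux

/-- `P k` has degree exactly `k` and `k` distinct roots, i.e. it has no multiple roots. -/
theorem stmt_2 (b c : ℂ) (k : ℕ) (hk : 1 ≤ k)
    (hb : (ascPochhammer ℂ k).eval b ≠ 0)
    (hc : (ascPochhammer ℂ k).eval c ≠ 0)
    (hbc : (ascPochhammer ℂ k).eval (b + c) ≠ 0) :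
    (hypP b c k).natDegree = k ∧ (hypP b c k).roots.toFinset.card = k ∧
      Squarefree (hypP b c k) := by
  have num1 : (ascPochhammer ℂ k).eval (-(k : ℂ)) ≠ 0 := by
    intro h
    rw [ascPochhammer_eval_eq_zero_iff] at h
    obtain ⟨i, hi, hie⟩ := h
    rw [neg_neg] at hie
    exact absurd (Nat.cast_injective hie) (by omega)
  have hck : HypAux.a b c k k ≠ 0 := by
    rw [HypAux.a]
    exact div_ne_zero (mul_ne_zero num1 hb)
      (mul_ne_zero (HypAux.den_ne c hc le_rfl) (Nat.cast_ne_zero.mpr k.factorial_ne_zero))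
  have hP0 : hypP b c k ≠ 0 := fun h => hck (by rw [← HypAux.coeff_hypP, h, coeff_zero])
  have hdeg : (hypP b c k).natDegree = k := by
    refine le_antisymm (natDegree_le_iff_coeff_eq_zero.mpr fun m hm => ?_)
      (le_natDegree_of_ne_zero ?_)
    · rw [HypAux.coeff_hypP]; exact HypAux.a_eq_zero b c hm
    · rw [HypAux.coeff_hypP]; exact hck
  have heval0 : (hypP b c k).eval 0 ≠ 0 := by
    rw [← coeff_zero_eq_eval_zero, HypAux.coeff_hypP, HypAux.a]
    simp
  have heval1 : (hypP b c k).eval 1 ≠ 0 := by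
    intro h
    apply hbc
    rw [← HypAux.eval_one_mul b c k hc, h, zero_mul]
  have hode := HypAux.ode_of_recur (hypP b c k) (-(k : ℂ)) b (1 - (k : ℂ) - c)
    (fun n => by rw [HypAux.coeff_hypP, HypAux.coeff_hypP]; exact HypAux.recur b c hc n)
  have hnodup : (hypP b c k).roots.Nodup := by
    rw [Multiset.nodup_iff_count_le_one]
    intro z
    rw [count_roots]
    by_cases hz0 : z = 0
    · subst hz0
      rw [rootMultiplicity_eq_zero heval0]; omega
    by_cases hz1 : z = 1
    · subst hz1
      rw [rootMultiplicity_eq_zero heval1]; omega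
    exact HypAux.mult_le_one (hypP b c k) _ _ _ hode hP0 hz0 hz1
  have hsep : (hypP b c k).Separable :=
    (nodup_roots_iff_of_splits hP0 (IsAlgClosed.splits _)).mp hnodup
  refine ⟨hdeg, ?_, hsep.squarefree⟩
  rw [Multiset.toFinset_card_of_nodup hnodup,
    splits_iff_card_roots.mp (IsAlgClosed.splits _), hdeg]
end

section
/- Let c ∈ ℂ and let k ≥ 1 be an integer such that (c)_k ≠ 0 and (2c)_k ≠ 0. Then the polynomials Q_k(z) and Q_{k−1}(z) have no common root in ℂ. -/
open Polynomial Finset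

/-- The Gauss hypergeometric polynomial `₂F₁(-k/2, -(k-1)/2; 1-k-c; z)` as a polynomial in `z`,
of degree `⌊k/2⌋`. -/
noncomputable def hypQ (c : ℂ) (k : ℕ) : Polynomial ℂ :=
  ∑ j ∈ Finset.range (k / 2 + 1),
    Polynomial.C ((ascPochhammer ℂ j).eval (-(k : ℂ) / 2) *
        (ascPochhammer ℂ j).eval (-((k : ℂ) - 1) / 2) /
      ((ascPochhammer ℂ j).eval (1 - (k : ℂ) - c) * (j.factorial : ℂ))) * Polynomial.X ^ j

lemma pe_prod (x : ℂ) (n : ℕ) :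
    (ascPochhammer ℂ n).eval x = ∏ i ∈ Finset.range n, (x + i) := by
  induction n with
  | zero => simp
  | succ n ih => rw [ascPochhammer_succ_eval, Finset.prod_range_succ, ih]

lemma pe_shift (x : ℂ) (n : ℕ) :
    (ascPochhammer ℂ (n+1)).eval x = x * (ascPochhammer ℂ n).eval (x+1) := by
  rw [ascPochhammer_succ_left]
  simp [eval_comp]

/-- The `j`-th coefficient of `hypQ c k`. -/
noncomputable def hcoef (c : ℂ) (k j : ℕ) : ℂ :=
  (ascPochhammer ℂ j).eval (-(k : ℂ) / 2) * (ascPochhammer ℂ j).eval (-((k : ℂ) - 1) / 2) /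
      ((ascPochhammer ℂ j).eval (1 - (k : ℂ) - c) * (j.factorial : ℂ))

lemma hcoef_zero (c : ℂ) {k j : ℕ} (h : k < 2 * j) : hcoef c k j = 0 := by
  unfold hcoef
  rcases Nat.even_or_odd k with ⟨t, rfl⟩ | ⟨t, rfl⟩
  · have ht : t ∈ Finset.range j := by simp; omega
    rw [pe_prod (-(((t+t : ℕ)) : ℂ) / 2) j, Finset.prod_eq_zero ht (by push_cast; ring),
      zero_mul, zero_div]
  · have ht : t ∈ Finset.range j := by simp; omega
    rw [pe_prod (-((((2*t+1 : ℕ)) : ℂ) - 1) / 2) j, Finset.prod_eq_zero ht (by push_cast; ring),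
      mul_zero, zero_div]

lemma hcoef_zero' (c : ℂ) (k : ℕ) : hcoef c k 0 = 1 := by
  simp [hcoef]

lemma hypQ_eval (c : ℂ) (k N : ℕ) (hN : k / 2 + 1 ≤ N) (z : ℂ) :
    (hypQ c k).eval z = ∑ j ∈ Finset.range N, hcoef c k j * z ^ j := by
  rw [hypQ, Polynomial.eval_finset_sum]
  simp only [eval_mul, eval_C, eval_pow, eval_X]
  refine Finset.sum_subset (Finset.range_subset_range.2 hN) ?_
  intro j _ hj
  have h : k < 2 * j := by simp only [Finset.mem_range] at hj; omega
  rw [show ((ascPochhammer ℂ j).eval (-(k : ℂ) / 2) *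
        (ascPochhammer ℂ j).eval (-((k : ℂ) - 1) / 2) /
      ((ascPochhammer ℂ j).eval (1 - (k : ℂ) - c) * (j.factorial : ℂ))) = hcoef c k j from rfl,
    hcoef_zero c h, zero_mul]

lemma hypQ_eval_zero (c : ℂ) (k : ℕ) : (hypQ c k).eval 0 = 1 := by
  rw [hypQ_eval c k (k/2+1) le_rfl 0, Finset.sum_eq_single 0]
  · simp [hcoef_zero']
  · intro b _ hb; simp [zero_pow hb]
  · intro h; exact absurd (Finset.mem_range.2 (by omega)) h

set_option maxHeartbeats 1000000 in
/-- The key coefficient identity. -/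
lemma hcoef_key (c : ℂ) (m j : ℕ) (hj : j ≤ m / 2)
    (h1 : ∀ i : ℕ, i ≤ m + 1 → c + (i : ℂ) ≠ 0) :
    hcoef c (m+2) (j+1) = hcoef c (m+1) (j+1)
      - (((m:ℂ)+1) * (2*c+(m:ℂ)) / (4*(c+(m:ℂ)+1)*(c+(m:ℂ)))) * hcoef c m j := by
  have hjm : j ≤ m := le_trans hj (Nat.div_le_self m 2)
  unfold hcoef
  have e1 : Polynomial.eval (-(((m+2:ℕ)):ℂ) / 2) (ascPochhammer ℂ (j + 1))
      = (-((m:ℂ)+2)/2) * Polynomial.eval (-(m:ℂ)/2) (ascPochhammer ℂ j) := by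
    rw [pe_shift, show (-(((m+2:ℕ)):ℂ)/2 + 1) = -(m:ℂ)/2 by push_cast; ring,
      show (-(((m+2:ℕ)):ℂ)/2) = -((m:ℂ)+2)/2 by push_cast; ring]
  have e2 : Polynomial.eval (-((((m+2:ℕ)):ℂ) - 1) / 2) (ascPochhammer ℂ (j + 1))
      = (-((m:ℂ)+1)/2) * Polynomial.eval (-((m:ℂ)-1)/2) (ascPochhammer ℂ j) := by
    rw [pe_shift, show (-((((m+2:ℕ)):ℂ) - 1)/2 + 1) = -((m:ℂ)-1)/2 by push_cast; ring,
      show (-((((m+2:ℕ)):ℂ) - 1)/2) = -((m:ℂ)+1)/2 by push_cast; ring]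
  have e3 : Polynomial.eval (1 - (((m+2:ℕ)):ℂ) - c) (ascPochhammer ℂ (j + 1))
      = (-1-(m:ℂ)-c) * Polynomial.eval (-(m:ℂ)-c) (ascPochhammer ℂ j) := by
    rw [pe_shift, show (1 - (((m+2:ℕ)):ℂ) - c + 1) = -(m:ℂ)-c by push_cast; ring,
      show (1 - (((m+2:ℕ)):ℂ) - c) = -1-(m:ℂ)-c by push_cast; ring]
  have e4 : Polynomial.eval (-(((m+1:ℕ)):ℂ) / 2) (ascPochhammer ℂ (j + 1))
      = (-((m:ℂ)+1)/2) * Polynomial.eval (-((m:ℂ)-1)/2) (ascPochhammer ℂ j) := by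
    rw [pe_shift, show (-(((m+1:ℕ)):ℂ)/2 + 1) = -((m:ℂ)-1)/2 by push_cast; ring,
      show (-(((m+1:ℕ)):ℂ)/2) = -((m:ℂ)+1)/2 by push_cast; ring]
  have e5 : Polynomial.eval (-((((m+1:ℕ)):ℂ) - 1) / 2) (ascPochhammer ℂ (j + 1))
      = Polynomial.eval (-(m:ℂ)/2) (ascPochhammer ℂ j) * (-(m:ℂ)/2 + j) := by
    rw [show (-((((m+1:ℕ)):ℂ) - 1)/2) = -(m:ℂ)/2 by push_cast; ring, ascPochhammer_succ_eval]
  have h6 : Polynomial.eval (-(m:ℂ)-c) (ascPochhammer ℂ (j+1))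
      = (-(m:ℂ)-c) * Polynomial.eval (1-(m:ℂ)-c) (ascPochhammer ℂ j) := by
    rw [pe_shift, show (-(m:ℂ)-c+1) = 1-(m:ℂ)-c by ring]
  have e6 : Polynomial.eval (1 - (((m+1:ℕ)):ℂ) - c) (ascPochhammer ℂ (j + 1))
      = (-(m:ℂ)-c) * Polynomial.eval (1-(m:ℂ)-c) (ascPochhammer ℂ j) := by
    rw [show (1 - (((m+1:ℕ)):ℂ) - c) = -(m:ℂ)-c by push_cast; ring, h6]
  -- nonvanishing facts
  have hv : (-(m:ℂ) - c) ≠ 0 := by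
    have := h1 m (by omega); intro h; apply this; linear_combination -h
  have hu : (-1 - (m:ℂ) - c) ≠ 0 := by
    have := h1 (m+1) (by omega); intro h; apply this; push_cast; linear_combination -h
  have hvj : (-(m:ℂ) - c + j) ≠ 0 := by
    have h2 := h1 (m - j) (by omega); intro h; apply h2
    have hc : ((m - j : ℕ) : ℂ) = (m:ℂ) - j := by rw [Nat.cast_sub hjm]
    rw [hc]; linear_combination -h
  have hE : Polynomial.eval (-(m:ℂ)-c) (ascPochhammer ℂ j) ≠ 0 := by
    rw [pe_prod]
    refine Finset.prod_ne_zero_iff.2 fun i hi => ?_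
    simp only [Finset.mem_range] at hi
    have h2 := h1 (m - i) (by omega)
    intro h; apply h2
    have hc : ((m - i : ℕ) : ℂ) = (m:ℂ) - i := by rw [Nat.cast_sub (by omega)]
    rw [hc]; linear_combination -h
  have hD : Polynomial.eval (1-(m:ℂ)-c) (ascPochhammer ℂ j) ≠ 0 := by
    rw [pe_prod]
    refine Finset.prod_ne_zero_iff.2 fun i hi => ?_
    simp only [Finset.mem_range] at hi
    have hi1 : i + 1 ≤ m := by omega
    have h2 := h1 (m - 1 - i) (by omega)
    intro h; apply h2
    have hc : ((m - 1 - i : ℕ) : ℂ) = (m:ℂ) - 1 - i := by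
      rw [Nat.cast_sub (by omega), Nat.cast_sub (by omega)]; push_cast; ring
    rw [hc]; linear_combination -h
  have hrel : Polynomial.eval (-(m:ℂ)-c) (ascPochhammer ℂ j) * (-(m:ℂ)-c+(j:ℂ))
      = (-(m:ℂ)-c) * Polynomial.eval (1-(m:ℂ)-c) (ascPochhammer ℂ j) :=
    (ascPochhammer_succ_eval j (-(m:ℂ)-c)).symm.trans h6
  have e6' : Polynomial.eval (1 - (((m+1:ℕ)):ℂ) - c) (ascPochhammer ℂ (j + 1))
      = Polynomial.eval (-(m:ℂ)-c) (ascPochhammer ℂ j) * (-(m:ℂ)-c+(j:ℂ)) := by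
    rw [show (1 - (((m+1:ℕ)):ℂ) - c) = -(m:ℂ)-c by push_cast; ring, ascPochhammer_succ_eval]
  have hfac : ((j.factorial : ℕ) : ℂ) ≠ 0 := Nat.cast_ne_zero.2 j.factorial_ne_zero
  have hj1 : ((j:ℂ) + 1) ≠ 0 := by
    intro h
    have h2 : ((j:ℂ) + 1) = ((j+1 : ℕ) : ℂ) := by push_cast; ring
    rw [h2] at h
    exact Nat.cast_ne_zero.2 (Nat.succ_ne_zero j) h
  have hcm : c + (m:ℂ) ≠ 0 := fun h => hv (by linear_combination -h)
  have hcm1 : c + (m:ℂ) + 1 ≠ 0 := fun h => hu (by linear_combination -h)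
  have h3 : Polynomial.eval (-(m:ℂ)/2) (ascPochhammer ℂ j) *
        Polynomial.eval (-((m:ℂ)-1)/2) (ascPochhammer ℂ j) /
        (Polynomial.eval (1-(m:ℂ)-c) (ascPochhammer ℂ j) * (j.factorial:ℂ))
      = (-(m:ℂ)-c) * (Polynomial.eval (-(m:ℂ)/2) (ascPochhammer ℂ j) *
          Polynomial.eval (-((m:ℂ)-1)/2) (ascPochhammer ℂ j)) /
        (Polynomial.eval (-(m:ℂ)-c) (ascPochhammer ℂ j) * (-(m:ℂ)-c+(j:ℂ)) * (j.factorial:ℂ)) := by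
    rw [div_eq_div_iff (mul_ne_zero hD hfac) (mul_ne_zero (mul_ne_zero hE hvj) hfac)]
    linear_combination (Polynomial.eval (-(m:ℂ)/2) (ascPochhammer ℂ j) *
      Polynomial.eval (-((m:ℂ)-1)/2) (ascPochhammer ℂ j) * (j.factorial:ℂ)) * hrel
  rw [e1, e2, e3, e4, e5, e6', h3, Nat.factorial_succ]
  push_cast
  set P1 := Polynomial.eval (-(m:ℂ)/2) (ascPochhammer ℂ j) with hP1
  set P2 := Polynomial.eval (-((m:ℂ)-1)/2) (ascPochhammer ℂ j) with hP2
  set E := Polynomial.eval (-(m:ℂ)-c) (ascPochhammer ℂ j) with hEdef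
  have h4 : (4:ℂ)*(c+(m:ℂ)+1)*(c+(m:ℂ)) ≠ 0 :=
    mul_ne_zero (mul_ne_zero (by norm_num) hcm1) hcm
  have hD2 : E*(-(m:ℂ)-c+(j:ℂ))*(((j:ℂ)+1)*((j.factorial:ℕ):ℂ)) ≠ 0 :=
    mul_ne_zero (mul_ne_zero hE hvj) (mul_ne_zero hj1 hfac)
  have hD3 : ((4:ℂ)*(c+(m:ℂ)+1)*(c+(m:ℂ)))*(E*(-(m:ℂ)-c+(j:ℂ))*((j.factorial:ℕ):ℂ)) ≠ 0 :=
    mul_ne_zero h4 (mul_ne_zero (mul_ne_zero hE hvj) hfac)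
  have hD1 : (-1-(m:ℂ)-c)*E*(((j:ℂ)+1)*((j.factorial:ℕ):ℂ)) ≠ 0 :=
    mul_ne_zero (mul_ne_zero hu hE) (mul_ne_zero hj1 hfac)
  rw [div_mul_div_comm, div_sub_div _ _ hD2 hD3, div_eq_div_iff hD1 (mul_ne_zero hD2 hD3)]
  ring

lemma hypQ_rec (c : ℂ) (m : ℕ) (h1 : ∀ i : ℕ, i ≤ m + 1 → c + (i:ℂ) ≠ 0) (z : ℂ) :
    (hypQ c (m+2)).eval z = (hypQ c (m+1)).eval z
      - ((m:ℂ)+1)*(2*c+(m:ℂ))/(4*(c+(m:ℂ)+1)*(c+(m:ℂ))) * z * (hypQ c m).eval z := by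
  rw [hypQ_eval c (m+2) (m/2+1+1) (by omega) z, hypQ_eval c (m+1) (m/2+1+1) (by omega) z,
    hypQ_eval c m (m/2+1) (by omega) z, Finset.mul_sum,
    Finset.sum_range_succ' (fun j => hcoef c (m+2) j * z^j) (m/2+1),
    Finset.sum_range_succ' (fun j => hcoef c (m+1) j * z^j) (m/2+1)]
  have hsum : ∑ i ∈ Finset.range (m/2+1), hcoef c (m+2) (i+1) * z^(i+1)
      = ∑ i ∈ Finset.range (m/2+1), (hcoef c (m+1) (i+1) * z^(i+1)
          - (((m:ℂ)+1)*(2*c+(m:ℂ))/(4*(c+(m:ℂ)+1)*(c+(m:ℂ))) * z) * (hcoef c m i * z^i)) := by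
    refine Finset.sum_congr rfl fun i hi => ?_
    have hi' : i ≤ m / 2 := by simpa [Nat.lt_succ_iff] using hi
    rw [hcoef_key c m i hi' h1]
    ring
  rw [hsum, Finset.sum_sub_distrib]
  simp [hcoef_zero']
  ring

lemma hypQ_zero_eval (c : ℂ) (z : ℂ) : (hypQ c 0).eval z = 1 := by
  rw [hypQ_eval c 0 1 (by norm_num) z]
  simp [hcoef_zero']

lemma descent (c : ℂ) (k : ℕ) (hc' : ∀ i : ℕ, i < k → c + (i:ℂ) ≠ 0)
    (h2c' : ∀ i : ℕ, i < k → 2*c + (i:ℂ) ≠ 0) :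
    ∀ m : ℕ, ∀ z : ℂ, z ≠ 0 → m + 1 ≤ k → (hypQ c (m+1)).eval z = 0 →
      (hypQ c m).eval z = 0 → False := by
  intro m
  induction m with
  | zero =>
    intro z _ _ _ h0
    rw [hypQ_zero_eval] at h0
    exact one_ne_zero h0
  | succ m ih =>
    intro z hz hk1 h2 h1
    have hrec := hypQ_rec c m (fun i hi => hc' i (by omega)) z
    rw [h2, h1] at hrec
    have hnum : ((m:ℂ)+1)*(2*c+(m:ℂ)) ≠ 0 := by
      refine mul_ne_zero ?_ (h2c' m (by omega))
      intro h
      have h2 : ((m:ℂ) + 1) = ((m+1 : ℕ) : ℂ) := by push_cast; ring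
      rw [h2] at h
      exact Nat.cast_ne_zero.2 (Nat.succ_ne_zero m) h
    have hden : (4*(c+(m:ℂ)+1)*(c+(m:ℂ))) ≠ 0 := by
      refine mul_ne_zero (mul_ne_zero (by norm_num) ?_) ?_
      · have := hc' (m+1) (by omega)
        intro h; apply this; push_cast; linear_combination h
      · have := hc' m (by omega)
        intro h; apply this; linear_combination h
    have hlam : ((m:ℂ)+1)*(2*c+(m:ℂ))/(4*(c+(m:ℂ)+1)*(c+(m:ℂ))) ≠ 0 :=
      div_ne_zero hnum hden
    have h3 : ((m:ℂ)+1)*(2*c+(m:ℂ))/(4*(c+(m:ℂ)+1)*(c+(m:ℂ))) * z * (hypQ c m).eval z = 0 := by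
      have h5 := hrec.symm
      rw [zero_sub, neg_eq_zero] at h5
      exact h5
    have hQ : (hypQ c m).eval z = 0 := by
      rcases mul_eq_zero.1 h3 with h4 | h4
      · rcases mul_eq_zero.1 h4 with h5 | h5
        · exact absurd h5 hlam
        · exact absurd h5 hz
      · exact h4
    exact ih z hz (by omega) h1 hQ

/-- `Q k` and `Q (k-1)` have no common root. -/
theorem stmt_4 (c : ℂ) (k : ℕ) (hk : 1 ≤ k)
    (hc : (ascPochhammer ℂ k).eval c ≠ 0)
    (h2c : (ascPochhammer ℂ k).eval (2 * c) ≠ 0) :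
    ∀ z : ℂ, ¬ ((hypQ c k).eval z = 0 ∧ (hypQ c (k - 1)).eval z = 0) := by
  rintro z ⟨h1, h2⟩
  rw [pe_prod] at hc h2c
  have hc' : ∀ i : ℕ, i < k → c + (i:ℂ) ≠ 0 := fun i hi h =>
    hc (Finset.prod_eq_zero (Finset.mem_range.2 hi) h)
  have h2c' : ∀ i : ℕ, i < k → 2*c + (i:ℂ) ≠ 0 := fun i hi h =>
    h2c (Finset.prod_eq_zero (Finset.mem_range.2 hi) h)
  have hz : z ≠ 0 := by
    intro h
    rw [h, hypQ_eval_zero] at h1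
    exact one_ne_zero h1
  obtain ⟨m, rfl⟩ : ∃ m, k = m + 1 := ⟨k - 1, by omega⟩
  have h2' : (hypQ c m).eval z = 0 := by simpa using h2
  exact descent c (m+1) hc' h2c' m z hz le_rfl h1 h2'
end

section
/- Let c ∈ ℂ and let k ≥ 1 be an integer such that (c)_k ≠ 0 and (2c)_k ≠ 0. Then the value of Q_k at z = 1 equals (c + 1/2)_{⌊k/2⌋} / (c + ⌈k/2⌉)_{⌊k/2⌋} (the same formula for both even and odd k). In particular, z = 1 is not a root of Q_k. -/
open Polynomial Finset

noncomputable def pE (n : ℕ) (x : ℂ) : ℂ := (ascPochhammer ℂ n).eval x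

lemma pE_zero (x : ℂ) : pE 0 x = 1 := by simp [pE]

lemma pE_succ (n : ℕ) (x : ℂ) : pE (n+1) x = pE n x * (x + n) :=
  ascPochhammer_succ_eval n x

lemma pE_add (a b : ℕ) (x : ℂ) : pE (a+b) x = pE a x * pE b (x + a) := by
  rw [pE, ← ascPochhammer_mul, eval_mul, eval_comp]
  simp [pE]

lemma pE_left (n : ℕ) (x : ℂ) : pE (n+1) x = x * pE n (x + 1) := by
  rw [show n + 1 = 1 + n by omega, pE_add]
  simp [pE]

lemma pE_reflect (n : ℕ) (x : ℂ) : pE n x = (-1)^n * pE n (-x - n + 1) := by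
  induction n with
  | zero => simp [pE_zero]
  | succ n ih =>
    have h1 : (-x - (↑(n+1) : ℂ) + 1) = -x - n := by push_cast; ring
    rw [pE_succ, ih, h1, pE_left]
    ring_nf

lemma pE_neg_nat (m j : ℕ) (h : j ≤ m) :
    pE j (-(m:ℂ)) = (-1)^j * m.choose j * j.factorial := by
  induction j with
  | zero => simp [pE_zero]
  | succ j ih =>
    have hj : j ≤ m := by omega
    have h2 : ((m.choose (j + 1) * (j + 1) : ℕ) : ℂ)
        = (m.choose j : ℂ) * ((m : ℂ) - j) := by
      rw [Nat.choose_succ_right_eq]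
      push_cast [Nat.cast_sub hj]
      ring
    push_cast at h2
    rw [pE_succ, ih hj, Nat.factorial_succ]
    push_cast
    linear_combination ((-1:ℂ)^j * (j.factorial : ℂ)) * h2

lemma pE_dup (m : ℕ) (c : ℂ) : pE (2*m) (2*c) = 4^m * pE m c * pE m (c + 1/2) := by
  induction m with
  | zero => simp [pE_zero]
  | succ m ih =>
    rw [show 2*(m+1) = 2*m+1+1 by ring, pE_succ, pE_succ, ih, pE_succ, pE_succ]
    push_cast
    ring

lemma chu (n : ℕ) (b C : ℂ) :
    ∑ j ∈ Finset.range (n+1),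
      (-1:ℂ)^j * (n.choose j) * pE j b * pE (n-j) (C + j) = pE n (C - b) := by
  induction n generalizing C with
  | zero => simp [pE_zero]
  | succ n ih =>
    set W : ℕ → ℂ := fun j => (-1:ℂ)^j * (n.choose j) * pE j b * pE (n+1-j) (C + j) with hW
    have key : ∀ j ∈ Finset.range (n+1),
        (-1:ℂ)^(j+1) * ((n+1).choose (j+1)) * pE (j+1) b * pE (n+1-(j+1)) (C + ((j+1 : ℕ) : ℂ))
        = (C - b) * ((-1)^j * (n.choose j) * pE j b * pE (n-j) ((C+1) + j))
          + (W (j+1) - W j) := by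
      intro j hj
      have hj' : j ≤ n := by simpa using Nat.lt_succ_iff.mp (Finset.mem_range.mp hj)
      have e1 : n + 1 - (j+1) = n - j := by omega
      have e2 : pE (n+1-j) (C + j) = (C + j) * pE (n-j) (C + j + 1) := by
        rw [show n+1-j = (n-j)+1 by omega, pE_left]
      have e3 : ((n+1).choose (j+1) : ℂ) = n.choose j + n.choose (j+1) := by
        rw [Nat.choose_succ_succ]; push_cast; ring
      rw [e1, hW]
      simp only
      rw [e2, e3, pE_succ j b]
      push_cast
      have e4 : (C + (↑j + 1) : ℂ) = C + ↑j + 1 := by ring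
      have e5 : (C + 1 + ↑j : ℂ) = C + ↑j + 1 := by ring
      rw [e4, e5]
      ring
    rw [Finset.sum_range_succ' _ (n+1), Finset.sum_congr rfl key,
      Finset.sum_add_distrib, Finset.sum_range_sub W, ← Finset.mul_sum, ih (C+1)]
    have hW0 : W 0 = pE (n+1) C := by simp [hW, pE]
    have hWtop : W (n+1) = 0 := by simp [hW, Nat.choose_succ_self]
    have hfirst : (-1:ℂ)^0 * ((n+1).choose 0 : ℂ) * pE 0 b * pE (n+1-0) (C + (0:ℕ)) = pE (n+1) C := by
      simp [pE_zero]
    have hfin : pE (n+1) (C-b) = (C-b) * pE n (C+1-b) := by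
      rw [pE_left, show (C-b+1:ℂ) = C+1-b by ring]
    rw [hW0, hWtop, hfirst, hfin]
    ring


lemma pE_def (n : ℕ) (x : ℂ) : pE n x = (ascPochhammer ℂ n).eval x := rfl

lemma denom_ne (k : ℕ) (c : ℂ) (hc : pE k c ≠ 0) (j : ℕ) (hj : j ≤ k) :
    pE j (1 - (k:ℂ) - c) ≠ 0 := by
  have hsplit : pE ((k-j)+j) c = pE (k-j) c * pE j (c + ((k-j : ℕ) : ℂ)) := pE_add _ _ _
  rw [show (k-j)+j = k by omega] at hsplit
  have h2 : pE j (c + ((k-j:ℕ):ℂ)) ≠ 0 := by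
    intro h0
    exact hc (by rw [hsplit, h0, mul_zero])
  push_cast [Nat.cast_sub hj] at h2
  rw [pE_reflect j (1 - (k:ℂ) - c),
    show (-(1-(k:ℂ)-c) - (j:ℂ) + 1 : ℂ) = c + ((k:ℂ) - (j:ℂ)) by ring]
  exact mul_ne_zero (pow_ne_zero j (by norm_num)) h2

lemma core (k m : ℕ) (c b : ℂ) (hk2 : k/2 = m)
    (hterm : ∀ j, j ≤ m → pE j (-(k:ℂ)/2) * pE j (-((k:ℂ)-1)/2)
        = ((-1:ℂ)^j * m.choose j * j.factorial) * pE j b)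
    (hc : pE k c ≠ 0) :
    (hypQ c k).eval 1 = pE m ((1 - (k:ℂ) - c) - b) / pE m (1 - (k:ℂ) - c) := by
  have hmk : m ≤ k := by omega
  have hCd : ∀ j, j ≤ k → pE j (1 - (k:ℂ) - c) ≠ 0 := denom_ne k c hc
  have hq : (hypQ c k).eval 1 = ∑ j ∈ Finset.range (m+1),
      pE j (-(k:ℂ)/2) * pE j (-((k:ℂ)-1)/2) / (pE j (1 - (k:ℂ)-c) * j.factorial) := by
    rw [hypQ, hk2]
    simp [pE, eval_finset_sum]
  have key : (hypQ c k).eval 1 * pE m (1 - (k:ℂ) - c) = pE m ((1 - (k:ℂ) - c) - b) := by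
    rw [hq, Finset.sum_mul, ← chu m b (1 - (k:ℂ) - c)]
    refine Finset.sum_congr rfl fun j hj => ?_
    have hjm : j ≤ m := Nat.lt_succ_iff.mp (Finset.mem_range.mp hj)
    have hsplit : pE m (1-(k:ℂ)-c) = pE j (1-(k:ℂ)-c) * pE (m-j) ((1-(k:ℂ)-c) + j) := by
      have h := pE_add j (m-j) (1-(k:ℂ)-c)
      rw [show j + (m-j) = m by omega] at h
      exact h
    rw [hterm j hjm, hsplit]
    have hne1 : pE j (1-(k:ℂ)-c) ≠ 0 := hCd j (le_trans hjm hmk)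
    have hne2 : (j.factorial : ℂ) ≠ 0 := Nat.cast_ne_zero.mpr j.factorial_ne_zero
    field_simp
  rw [eq_div_iff (hCd m hmk)]
  exact key

/-- `Q k (1) = (c + 1/2)_{⌊k/2⌋} / (c + ⌈k/2⌉)_{⌊k/2⌋}`, for both even and odd `k`;
in particular `z = 1` is not a root of `Q k`. -/
theorem stmt_6 (c : ℂ) (k : ℕ) (hk : 1 ≤ k)
    (hc : (ascPochhammer ℂ k).eval c ≠ 0)
    (h2c : (ascPochhammer ℂ k).eval (2 * c) ≠ 0) :
    (hypQ c k).eval 1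
        = (ascPochhammer ℂ (k / 2)).eval (c + 1 / 2) /
          (ascPochhammer ℂ (k / 2)).eval (c + (((k + 1) / 2 : ℕ) : ℂ)) ∧
      (hypQ c k).eval 1 ≠ 0 := by
  have hc' : pE k c ≠ 0 := hc
  have h2c' : pE k (2 * c) ≠ 0 := h2c
  simp only [← pE_def]
  have hsgn : ((-1:ℂ))^(k/2) ≠ 0 := pow_ne_zero _ (by norm_num)
  rcases Nat.even_or_odd k with ⟨m, hm⟩ | ⟨m, hm⟩
  · -- even : k = m + m
    have hkm : k = 2*m := by omega
    have hk2 : k/2 = m := by omega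
    have hk12 : (k+1)/2 = m := by omega
    have hm1 : 1 ≤ m := by omega
    -- the Chu-Vandermonde evaluation
    have hcore := core k m c (-((k:ℂ)-1)/2) hk2 (fun j hj => by
      rw [show (-(k:ℂ)/2) = -(m:ℂ) by rw [hkm]; push_cast; ring, pE_neg_nat m j hj]) hc'
    have e1 : (1 - (k:ℂ) - c) - (-((k:ℂ)-1)/2) = 1/2 - m - c := by
      rw [hkm]; push_cast; ring
    have e2 : pE m (1/2 - (m:ℂ) - c) = (-1:ℂ)^m * pE m (c + 1/2) := by
      rw [pE_reflect m (1/2 - (m:ℂ) - c),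
        show (-(1/2 - (m:ℂ) - c) - (m:ℂ) + 1 : ℂ) = c + 1/2 by ring]
    have e3 : pE m (1 - (k:ℂ) - c) = (-1:ℂ)^m * pE m (c + (m:ℂ)) := by
      rw [pE_reflect m (1 - (k:ℂ) - c), hkm,
        show (-(1 - ((2*m:ℕ):ℂ) - c) - (m:ℂ) + 1 : ℂ) = c + (m:ℂ) by push_cast; ring]
    rw [e1, e2, e3, mul_div_mul_left _ _ (pow_ne_zero m (by norm_num : (-1:ℂ) ≠ 0))] at hcore
    have hnum : pE m (c + 1/2) ≠ 0 := by
      have hd := pE_dup m c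
      rw [← hkm] at hd
      rw [hd] at h2c'
      exact fun h0 => h2c' (by rw [h0, mul_zero])
    have hden : pE m (c + (m:ℂ)) ≠ 0 := by
      have := denom_ne k c hc' m (by omega)
      rw [e3] at this
      exact fun h0 => this (by rw [h0, mul_zero])
    rw [hk2, hk12]
    exact ⟨hcore, by rw [hcore]; exact div_ne_zero hnum hden⟩
  · -- odd : k = 2*m + 1
    have hkm : k = 2*m+1 := hm
    have hk2 : k/2 = m := by omega
    have hk12 : (k+1)/2 = m+1 := by omega
    have hcore := core k m c (-(k:ℂ)/2) hk2 (fun j hj => by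
      rw [show (-((k:ℂ)-1)/2) = -(m:ℂ) by rw [hkm]; push_cast; ring, pE_neg_nat m j hj]
      ring) hc'
    have e1 : (1 - (k:ℂ) - c) - (-(k:ℂ)/2) = 1/2 - m - c := by
      rw [hkm]; push_cast; ring
    have e2 : pE m (1/2 - (m:ℂ) - c) = (-1:ℂ)^m * pE m (c + 1/2) := by
      rw [pE_reflect m (1/2 - (m:ℂ) - c),
        show (-(1/2 - (m:ℂ) - c) - (m:ℂ) + 1 : ℂ) = c + 1/2 by ring]
    have e3 : pE m (1 - (k:ℂ) - c) = (-1:ℂ)^m * pE m (c + ((m:ℂ)+1)) := by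
      rw [pE_reflect m (1 - (k:ℂ) - c), hkm,
        show (-(1 - ((2*m+1:ℕ):ℂ) - c) - (m:ℂ) + 1 : ℂ) = c + ((m:ℂ)+1) by push_cast; ring]
    rw [e1, e2, e3, mul_div_mul_left _ _ (pow_ne_zero m (by norm_num : (-1:ℂ) ≠ 0))] at hcore
    have hnum : pE m (c + 1/2) ≠ 0 := by
      have hstep : pE k (2*c) = pE (2*m) (2*c) * (2*c + ((2*m:ℕ):ℂ)) := by
        rw [hkm]; exact pE_succ (2*m) (2*c)
      rw [hstep, pE_dup m c] at h2c'
      intro h0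
      exact h2c' (by rw [h0]; ring)
    have hden : pE m (c + ((m:ℂ)+1)) ≠ 0 := by
      have := denom_ne k c hc' m (by omega)
      rw [e3] at this
      exact fun h0 => this (by rw [h0, mul_zero])
    rw [hk2, hk12]
    have ecast : ((m+1:ℕ):ℂ) = (m:ℂ)+1 := by push_cast; ring
    rw [ecast]
    exact ⟨hcore, by rw [hcore]; exact div_ne_zero hnum hden⟩
end

section
/- Let b, c ∈ ℂ and let N ∈ ℕ satisfy (b)_N ≠ 0 and (c)_N ≠ 0. Then the following identity of polynomials in z holds (reflecting the same hypergeometric sum taken in the opposite direction): (c)_N · ∑_{k=0}^{N} ((−N)_k (b)_k / ((1−N−c)_k · k!)) z^k = (b)_N · ∑_{k=0}^{N} ((−N)_k (c)_k / ((1−N−b)_k · k!)) z^{N−k}. Equivalently, (c)_N · 2F1(−N, b; −c+1−N; z) = (b)_N · z^N · 2F1(−N, c; −b+1−N; 1/z). -/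
open Polynomial Finset

private lemma auxMul (x : ℂ) (N k : ℕ) (hk : k ≤ N) :
    (ascPochhammer ℂ N).eval x
      = (ascPochhammer ℂ (N - k)).eval x *
        (ascPochhammer ℂ k).eval (x + ((N - k : ℕ) : ℂ)) := by
  conv_lhs => rw [← Nat.sub_add_cancel hk, ← ascPochhammer_mul]
  simp [eval_comp]

private lemma auxA (c : ℂ) (N k : ℕ) (hk : k ≤ N) :
    (ascPochhammer ℂ k).eval (1 - (N : ℂ) - c) * (ascPochhammer ℂ (N - k)).eval c
      = (-1) ^ k * (ascPochhammer ℂ N).eval c := by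
  rw [show (1 - (N : ℂ) - c) = -(c + N - 1) by ring,
    ascPochhammer_eval_neg_eq_descPochhammer, descPochhammer_eval_eq_ascPochhammer]
  rw [show (c + (N : ℂ) - 1 - k + 1) = c + ((N - k : ℕ) : ℂ) by
    push_cast [Nat.cast_sub hk]; ring]
  rw [auxMul c N k hk]
  ring

private lemma auxB (N k : ℕ) (hk : k ≤ N) :
    (ascPochhammer ℂ k).eval (-(N : ℂ)) * ((N - k).factorial : ℂ)
      = (-1) ^ k * (N.factorial : ℂ) := by
  rw [ascPochhammer_eval_neg_eq_descPochhammer, descPochhammer_eval_eq_descFactorial]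
  rw [mul_assoc]
  congr 1
  rw [mul_comm]
  rw [← Nat.cast_mul, Nat.factorial_mul_descFactorial hk]

private lemma auxNe (x : ℂ) {N : ℕ} (k : ℕ) (hk : k ≤ N)
    (hx : (ascPochhammer ℂ N).eval x ≠ 0) :
    (ascPochhammer ℂ (N - k)).eval x ≠ 0 := by
  intro h
  apply hx
  rw [auxMul x N k hk, h, zero_mul]

/-- Reversal symmetry of hypergeometric polynomials:
`(c)_N · ₂F₁(-N, b; 1-N-c; z) = (b)_N · z^N · ₂F₁(-N, c; 1-N-b; 1/z)`
as an identity of polynomials in `z`. -/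
theorem stmt_7 (b c : ℂ) (N : ℕ)
    (hb : (ascPochhammer ℂ N).eval b ≠ 0)
    (hc : (ascPochhammer ℂ N).eval c ≠ 0) :
    Polynomial.C ((ascPochhammer ℂ N).eval c) *
        ∑ k ∈ Finset.range (N + 1),
          Polynomial.C ((ascPochhammer ℂ k).eval (-(N : ℂ)) * (ascPochhammer ℂ k).eval b /
            ((ascPochhammer ℂ k).eval (1 - (N : ℂ) - c) * (k.factorial : ℂ))) * Polynomial.X ^ k
      = Polynomial.C ((ascPochhammer ℂ N).eval b) *
        ∑ k ∈ Finset.range (N + 1),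
          Polynomial.C ((ascPochhammer ℂ k).eval (-(N : ℂ)) * (ascPochhammer ℂ k).eval c /
            ((ascPochhammer ℂ k).eval (1 - (N : ℂ) - b) * (k.factorial : ℂ))) *
            Polynomial.X ^ (N - k) := by
  rw [← Finset.sum_range_reflect
    (fun k => Polynomial.C ((ascPochhammer ℂ k).eval (-(N : ℂ)) * (ascPochhammer ℂ k).eval c /
      ((ascPochhammer ℂ k).eval (1 - (N : ℂ) - b) * (k.factorial : ℂ))) *
      Polynomial.X ^ (N - k)) (N + 1)]
  rw [Finset.mul_sum, Finset.mul_sum]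
  apply Finset.sum_congr rfl
  intro k hk
  rw [Finset.mem_range] at hk
  have hkN : k ≤ N := Nat.lt_succ_iff.mp hk
  have e1 : N + 1 - 1 - k = N - k := by omega
  have e2 : N - (N - k) = k := by omega
  rw [e1, e2, ← mul_assoc, ← mul_assoc, ← Polynomial.C_mul, ← Polynomial.C_mul]
  congr 2
  -- scalar identity
  have hA := auxA c N k hkN
  have hA' := auxA b N (N - k) (Nat.sub_le N k)
  rw [e2] at hA'
  have hB := auxB N k hkN
  have hB' := auxB N (N - k) (Nat.sub_le N k)
  rw [e2] at hB'
  have hQ1 : (ascPochhammer ℂ (N - k)).eval c ≠ 0 := auxNe c k hkN hc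
  have hQ2 : (ascPochhammer ℂ k).eval b ≠ 0 := by
    have := auxNe b (N - k) (Nat.sub_le N k) hb
    rwa [e2] at this
  have hP1 : (ascPochhammer ℂ k).eval (1 - (N : ℂ) - c) ≠ 0 := by
    intro h
    rw [h, zero_mul] at hA
    refine hc ?_
    have := hA.symm
    rwa [mul_eq_zero, or_iff_right (pow_ne_zero _ (by norm_num : (-1:ℂ) ≠ 0))] at this
  have hP2 : (ascPochhammer ℂ (N - k)).eval (1 - (N : ℂ) - b) ≠ 0 := by
    intro h
    rw [h, zero_mul] at hA'
    refine hb ?_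
    have := hA'.symm
    rwa [mul_eq_zero, or_iff_right (pow_ne_zero _ (by norm_num : (-1:ℂ) ≠ 0))] at this
  have hF1 : ((k.factorial : ℂ)) ≠ 0 := Nat.cast_ne_zero.mpr k.factorial_ne_zero
  have hF2 : (((N - k).factorial : ℂ)) ≠ 0 := Nat.cast_ne_zero.mpr (N - k).factorial_ne_zero
  have key : (ascPochhammer ℂ N).eval c *
        ((ascPochhammer ℂ k).eval (-(N : ℂ)) * (ascPochhammer ℂ k).eval b) *
        ((ascPochhammer ℂ (N - k)).eval (1 - (N : ℂ) - b) * ((N - k).factorial : ℂ))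
      = (ascPochhammer ℂ N).eval b *
        ((ascPochhammer ℂ (N - k)).eval (-(N : ℂ)) * (ascPochhammer ℂ (N - k)).eval c) *
        ((ascPochhammer ℂ k).eval (1 - (N : ℂ) - c) * (k.factorial : ℂ)) := by
    linear_combination ((ascPochhammer ℂ N).eval c * (ascPochhammer ℂ k).eval b *
      (ascPochhammer ℂ (N - k)).eval (1 - (N : ℂ) - b)) * hB
      + ((ascPochhammer ℂ N).eval c * (-1) ^ k * (N.factorial : ℂ)) * hA'
      - ((ascPochhammer ℂ N).eval b * (ascPochhammer ℂ (N - k)).eval c *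
      (ascPochhammer ℂ k).eval (1 - (N : ℂ) - c)) * hB'
      - ((ascPochhammer ℂ N).eval b * (-1) ^ (N - k) * (N.factorial : ℂ)) * hA
  field_simp
  linear_combination key
end

section
/- Let a, α, β ∈ ℂ with α ≠ 0, and let k ∈ ℕ satisfy (a)_k ≠ 0. Then the coefficient g_k = ∑_{j=0}^{⌊k/2⌋} ((−1)^{k−j} (a)_{k−j} α^{k−2j} β^j) / ((k−2j)! · j!) of x^k in the power series expansion of (1+αx+βx²)^{−a} admits the hypergeometric expression g_k = ((−α)^k (a)_k / k!) · ∑_{j=0}^{⌊k/2⌋} ((−k/2)_j (−(k−1)/2)_j / ((1−k−a)_j · j!)) (4β/α²)^j, i.e., g_k = ((−α)^k (a)_k/k!) · 2F1(−k/2, −(k−1)/2; 1−k−a; 4β/α²). -/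
open Finset

open Polynomial

lemma aux1 : ∀ (j m : ℕ) (x : ℂ), (ascPochhammer ℂ (m + j)).eval x =
    (ascPochhammer ℂ m).eval x * (ascPochhammer ℂ j).eval (x + m) := by
  intro j
  induction j with
  | zero => simp
  | succ j ih =>
    intro m x
    rw [← Nat.add_assoc, ascPochhammer_succ_eval, ih, ascPochhammer_succ_eval]
    push_cast
    ring

lemma aux2 : ∀ (j : ℕ) (y : ℂ), (ascPochhammer ℂ j).eval (1 - y - j) =
    (-1) ^ j * (ascPochhammer ℂ j).eval y := by
  intro j
  induction j with
  | zero => simp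
  | succ j ih =>
    intro y
    have h1 : (1 : ℂ) - y - (j + 1 : ℕ) = 1 - (y + 1) - j := by push_cast; ring
    have h5 : (ascPochhammer ℂ (j + 1)).eval y = y * (ascPochhammer ℂ j).eval (y + 1) := by
      rw [Nat.add_comm, aux1 j 1 y]; simp
    rw [ascPochhammer_succ_eval, h1, ih (y + 1), h5]
    have h6 : (1 - (y + 1) - j + j : ℂ) = -y := by ring
    rw [h6]
    ring

lemma aux3 : ∀ (j k : ℕ), 2 * j ≤ k →
    (ascPochhammer ℂ j).eval (-(k : ℂ) / 2) * (ascPochhammer ℂ j).eval (-((k : ℂ) - 1) / 2) *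
      ((k - 2 * j).factorial : ℂ) * 4 ^ j = (k.factorial : ℂ) := by
  intro j
  induction j with
  | zero => simp
  | succ j ih =>
    intro k hk
    have h2j : 2 * j ≤ k := by omega
    have hfac : (k - 2 * j) = (k - 2 * (j + 1)) + 2 := by omega
    have hf : ((k - 2 * j).factorial : ℂ) =
        ((k : ℂ) - 2 * j) * ((k : ℂ) - 2 * j - 1) * ((k - 2 * (j + 1)).factorial : ℂ) := by
      rw [hfac]
      rw [Nat.factorial_succ, Nat.factorial_succ]
      push_cast
      rw [show ((k - 2 * (j + 1) : ℕ) : ℂ) + 1 + 1 = (k : ℂ) - 2 * j from by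
            push_cast [Nat.cast_sub (by omega : 2 * (j + 1) ≤ k)]; ring,
          show ((k - 2 * (j + 1) : ℕ) : ℂ) + 1 = (k : ℂ) - 2 * j - 1 from by
            push_cast [Nat.cast_sub (by omega : 2 * (j + 1) ≤ k)]; ring]
      ring
    have := ih k h2j
    rw [hf] at this
    rw [ascPochhammer_succ_eval, ascPochhammer_succ_eval]
    rw [pow_succ]
    linear_combination this

lemma aux4 (α β A B P Q F1 F2 K : ℂ) (j m k' : ℕ)
    (hB : B ≠ 0) (hF1 : F1 ≠ 0) (hF2 : F2 ≠ 0) (hK : K ≠ 0) (hα : α ≠ 0)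
    (hh : P * Q * F1 * 4 ^ j = K) :
    (-1) ^ m * A * α ^ k' * β ^ j / (F1 * F2) =
      (-1) ^ m * (-1) ^ j * (α ^ k' * (α ^ 2) ^ j) * (A * B) / K *
        (P * Q / ((-1) ^ j * B * F2) * ((4 * β) ^ j / ((α ^ 2) ^ j))) := by
  have h4 : ((-1 : ℂ)) ^ j ≠ 0 := pow_ne_zero _ (by norm_num)
  have hα2 : ((α ^ 2 : ℂ)) ^ j ≠ 0 := pow_ne_zero _ (pow_ne_zero _ hα)
  rw [div_mul_div_comm, div_mul_div_comm,
    div_eq_div_iff (mul_ne_zero hF1 hF2)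
      (mul_ne_zero hK (mul_ne_zero (mul_ne_zero (mul_ne_zero h4 hB) hF2) hα2))]
  rw [mul_pow 4 β]
  linear_combination -((-1:ℂ)) ^ m * (-1) ^ j * A * α ^ k' * (α ^ 2) ^ j * β ^ j * B * F2 * hh


/-- The coefficient `g_k` of `x^k` in `(1 + αx + βx²)^{-a}` has the hypergeometric
expression `g_k = ((-α)^k (a)_k / k!) · ₂F₁(-k/2, -(k-1)/2; 1-k-a; 4β/α²)`. -/
theorem stmt_10 (a α β : ℂ) (hα : α ≠ 0) (k : ℕ) (ha : (ascPochhammer ℂ k).eval a ≠ 0) :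
    ∑ j ∈ Finset.range (k / 2 + 1),
        (-1) ^ (k - j) * (ascPochhammer ℂ (k - j)).eval a * α ^ (k - 2 * j) * β ^ j /
          (((k - 2 * j).factorial : ℂ) * (j.factorial : ℂ))
      = (-α) ^ k * (ascPochhammer ℂ k).eval a / (k.factorial : ℂ) *
        ∑ j ∈ Finset.range (k / 2 + 1),
          (ascPochhammer ℂ j).eval (-(k : ℂ) / 2) *
              (ascPochhammer ℂ j).eval (-((k : ℂ) - 1) / 2) /
            ((ascPochhammer ℂ j).eval (1 - (k : ℂ) - a) * (j.factorial : ℂ)) *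
            (4 * β / α ^ 2) ^ j := by
  rw [Finset.mul_sum]
  refine Finset.sum_congr rfl fun j hj => ?_
  have hjk : 2 * j ≤ k := by
    have := Finset.mem_range.mp hj
    omega
  have hjk' : j ≤ k := by omega
  have hcast : ((k - j : ℕ) : ℂ) = (k : ℂ) - j := Nat.cast_sub hjk'
  have hsplit : (ascPochhammer ℂ k).eval a =
      (ascPochhammer ℂ (k - j)).eval a * (ascPochhammer ℂ j).eval (a + ((k : ℂ) - j)) := by
    rw [← hcast, show k = (k - j) + j from by omega]
    rw [show (k - j) + j - j = k - j from by omega]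
    exact aux1 j (k - j) a
  have hA : (ascPochhammer ℂ (k - j)).eval a ≠ 0 := by
    rw [hsplit] at ha; exact left_ne_zero_of_mul ha
  have hBne : (ascPochhammer ℂ j).eval (a + ((k : ℂ) - j)) ≠ 0 := by
    rw [hsplit] at ha; exact right_ne_zero_of_mul ha
  have hsign : (ascPochhammer ℂ j).eval (1 - (k : ℂ) - a) =
      (-1) ^ j * (ascPochhammer ℂ j).eval (a + ((k : ℂ) - j)) := by
    have h := aux2 j (a + ((k : ℂ) - j))
    rw [show (1 : ℂ) - (a + ((k : ℂ) - j)) - j = 1 - (k : ℂ) - a from by ring] at h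
    exact h
  have hhalf := aux3 j k hjk
  have hα2 : (-α) ^ k = (-1) ^ (k - j) * (-1) ^ j * (α ^ (k - 2 * j) * (α ^ 2) ^ j) := by
    rw [neg_pow]
    rw [show (-1 : ℂ) ^ k = (-1) ^ (k - j) * (-1) ^ j from by
      rw [← pow_add]; congr 1; omega]
    rw [show α ^ k = α ^ (k - 2 * j) * (α ^ 2) ^ j from by
      rw [← pow_mul, ← pow_add]; congr 1; omega]
  have hf1 : (((k - 2 * j).factorial : ℂ)) ≠ 0 := Nat.cast_ne_zero.mpr (Nat.factorial_ne_zero _)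
  have hf2 : ((j.factorial : ℂ)) ≠ 0 := Nat.cast_ne_zero.mpr (Nat.factorial_ne_zero _)
  have hf3 : ((k.factorial : ℂ)) ≠ 0 := Nat.cast_ne_zero.mpr (Nat.factorial_ne_zero _)
  have hneg1 : ((-1 : ℂ)) ^ j ≠ 0 := pow_ne_zero _ (by norm_num)
  rw [hsplit, hsign, hα2, div_pow]
  exact aux4 α β _ _ _ _ _ _ _ j (k - j) (k - 2 * j) hBne hf1 hf2 hf3 hα hhalf
end

section
/- Let e, z ∈ ℚ (or in any field of characteristic 0) with z ≠ 0, z ≠ 1, and 3e+2z+2 ≠ 0. Define b = e(e+1)(e+2) / (z(1−z)(3e+2z+2)) and c = e(e+z)(e+2z) / ((z−1)(3e+2z+2)). Then S(b,c,z) = 0; that is, the point (b, c, z) lies on the algebraic surface S₃ defined by the cubic hypergeometric equation, so this gives a (birational) parametrization of S₃ by the coordinates e and z. -/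
set_option maxHeartbeats 1000000 in
/-- The parametrization of the surface `S₃ : ₂F₁(-3, b; -c-2; z) = 0` by `e` and `z`. -/
theorem stmt_11 {K : Type*} [Field K] [CharZero K] (e z : K)
    (hz0 : z ≠ 0) (hz1 : z ≠ 1) (he : 3 * e + 2 * z + 2 ≠ 0)
    (b c : K)
    (hb : b = e * (e + 1) * (e + 2) / (z * (1 - z) * (3 * e + 2 * z + 2)))
    (hc : c = e * (e + z) * (e + 2 * z) / ((z - 1) * (3 * e + 2 * z + 2))) :
    b * (b + 1) * (b + 2) * z ^ 3 + 3 * b * c * (b + 1) * z ^ 2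
      + 3 * b * c * (c + 1) * z + c * (c + 1) * (c + 2) = 0 := by
  have h1 : (1 : K) - z ≠ 0 := sub_ne_zero.mpr (Ne.symm hz1)
  set w : K := z * (1 - z) * (3 * e + 2 * z + 2) with hw_def
  have hw : w ≠ 0 := mul_ne_zero (mul_ne_zero hz0 h1) he
  have hb' : b * w = e * (e + 1) * (e + 2) := by
    rw [hb]; field_simp
  have hc' : c * w = -(z * (e * (e + z) * (e + 2 * z))) := by
    rw [hc, hw_def]
    have h2 : z - 1 ≠ 0 := sub_ne_zero.mpr hz1
    rw [div_mul_eq_mul_div, div_eq_iff (mul_ne_zero h2 he)]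
    ring
  have key : (b * (b + 1) * (b + 2) * z ^ 3 + 3 * b * c * (b + 1) * z ^ 2
      + 3 * b * c * (c + 1) * z + c * (c + 1) * (c + 2)) * w ^ 3 = 0 := by
    have expand : (b * (b + 1) * (b + 2) * z ^ 3 + 3 * b * c * (b + 1) * z ^ 2
        + 3 * b * c * (c + 1) * z + c * (c + 1) * (c + 2)) * w ^ 3
        = (b * w) * (b * w + w) * (b * w + 2 * w) * z ^ 3
          + 3 * (b * w) * (c * w) * (b * w + w) * z ^ 2
          + 3 * (b * w) * (c * w) * (c * w + w) * z
          + (c * w) * (c * w + w) * (c * w + 2 * w) := by ring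
    rw [expand, hb', hc', hw_def]
    ring
  exact (mul_eq_zero.mp key).resolve_right (pow_ne_zero 3 hw)
end

section
/- Let t be transcendental over ℚ and work in the rational function field ℚ(t). Set b = t²/3 − 1 and c = −t²/6 − 1/2. Then the cubic polynomial S(b,c,z) = b(b+1)(b+2)z³ + 3bc(b+1)z² + 3bc(c+1)z + c(c+1)(c+2), viewed as a polynomial in z over ℚ(t), splits completely into linear factors over ℚ(t): there exist z₁, z₂, z₃ ∈ ℚ(t) with S(b,c,z) = b(b+1)(b+2)·(z−z₁)(z−z₂)(z−z₃). -/
open Polynomial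

instance : CharZero (RatFunc ℚ) :=
  charZero_of_injective_algebraMap (algebraMap ℚ (RatFunc ℚ)).injective

lemma expand_cubic (a z₁ z₂ z₃ : RatFunc ℚ) :
    Polynomial.C a * (Polynomial.X - Polynomial.C z₁) * (Polynomial.X - Polynomial.C z₂) *
        (Polynomial.X - Polynomial.C z₃)
      = Polynomial.C a * Polynomial.X ^ 3
        + Polynomial.C (-(a * (z₁ + z₂ + z₃))) * Polynomial.X ^ 2
        + Polynomial.C (a * (z₁ * z₂ + z₁ * z₃ + z₂ * z₃)) * Polynomial.X
        + Polynomial.C (-(a * (z₁ * z₂ * z₃))) := by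
  simp only [map_mul, map_add, map_neg]
  ring

set_option maxHeartbeats 1600000 in
/-- For `b = t²/3 - 1` and `c = -t²/6 - 1/2` in `ℚ(t)`, the cubic
`S(b,c,z) = b(b+1)(b+2)z³ + 3bc(b+1)z² + 3bc(c+1)z + c(c+1)(c+2)` (as a polynomial in `z`)
splits completely into linear factors over `ℚ(t)`. -/
theorem stmt_12 (b c : RatFunc ℚ)
    (hb : b = RatFunc.X ^ 2 / 3 - 1) (hc : c = -RatFunc.X ^ 2 / 6 - 1 / 2) :
    ∃ z₁ z₂ z₃ : RatFunc ℚ,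
      Polynomial.C (b * (b + 1) * (b + 2)) * Polynomial.X ^ 3
          + Polynomial.C (3 * b * c * (b + 1)) * Polynomial.X ^ 2
          + Polynomial.C (3 * b * c * (c + 1)) * Polynomial.X
          + Polynomial.C (c * (c + 1) * (c + 2))
        = Polynomial.C (b * (b + 1) * (b + 2)) * (Polynomial.X - Polynomial.C z₁) *
            (Polynomial.X - Polynomial.C z₂) * (Polynomial.X - Polynomial.C z₃) := by
  have hX : (RatFunc.X : RatFunc ℚ) ≠ 0 := RatFunc.X_ne_zero
  have h2X : (2 * RatFunc.X : RatFunc ℚ) ≠ 0 := mul_ne_zero (by norm_num) hX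
  refine ⟨(RatFunc.X + 3) / (2 * RatFunc.X), (RatFunc.X - 3) / (2 * RatFunc.X), 1 / 2, ?_⟩
  rw [expand_cubic]
  have h2 : 3 * b * c * (b + 1)
      = -(b * (b + 1) * (b + 2) *
          ((RatFunc.X + 3) / (2 * RatFunc.X) + (RatFunc.X - 3) / (2 * RatFunc.X) + 1 / 2)) := by
    subst hb hc
    field_simp [h2X]
    try rw [eq_div_iff (by simp [mul_ne_zero_iff, hX])]
    ring
  have h1 : 3 * b * c * (c + 1)
      = b * (b + 1) * (b + 2) *
          ((RatFunc.X + 3) / (2 * RatFunc.X) * ((RatFunc.X - 3) / (2 * RatFunc.X))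
            + (RatFunc.X + 3) / (2 * RatFunc.X) * (1 / 2)
            + (RatFunc.X - 3) / (2 * RatFunc.X) * (1 / 2)) := by
    subst hb hc
    field_simp [h2X]
    try rw [eq_div_iff (by simp [mul_ne_zero_iff, hX])]
    ring
  have h0 : c * (c + 1) * (c + 2)
      = -(b * (b + 1) * (b + 2) *
          ((RatFunc.X + 3) / (2 * RatFunc.X) * ((RatFunc.X - 3) / (2 * RatFunc.X)) * (1 / 2))) := by
    subst hb hc
    field_simp [h2X]
    try rw [eq_div_iff (by simp [mul_ne_zero_iff, hX])]
    ring
  rw [h2, h1, h0]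
end

section
/- Let K be a field of characteristic 0 and let b, u, v ∈ K with b ∉ {0, −1, −2} and v ≠ 0. Suppose v² = u³ + b²(3u − 16b − 16)². Define c = −(b+2)(v + 3bu − 16b(b+1))/(2v) and z = (v + (3b+4)u − 16b(b+1))/(2v). Then S(b,c,z) = 0, i.e., (b, c, z) lies on the surface S₃; thus the map (u,v) ↦ (c,z) sends points of the elliptic curve E₃: v² = u³ + b²(3u−16b−16)² to points of the genus-1 curve cut out on S₃ by fixing b. -/
/-- The isomorphism from the elliptic curve `E₃ : v² = u³ + b²(3u - 16b - 16)²` to the genus-1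
curve cut out on the surface `S₃` by fixing `b`. -/
theorem stmt_13 {K : Type*} [Field K] [CharZero K] (b u v : K)
    (hb0 : b ≠ 0) (hb1 : b ≠ -1) (hb2 : b ≠ -2) (hv : v ≠ 0)
    (hE : v ^ 2 = u ^ 3 + b ^ 2 * (3 * u - 16 * b - 16) ^ 2)
    (c z : K)
    (hc : c = -(b + 2) * (v + 3 * b * u - 16 * b * (b + 1)) / (2 * v))
    (hz : z = (v + (3 * b + 4) * u - 16 * b * (b + 1)) / (2 * v)) :
    b * (b + 1) * (b + 2) * z ^ 3 + 3 * b * c * (b + 1) * z ^ 2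
      + 3 * b * c * (c + 1) * z + c * (c + 1) * (c + 2) = 0 := by
  have h2v : (2 : K) * v ≠ 0 := by simp [hv]
  rw [eq_div_iff h2v] at hc hz
  set C : K := -(b + 2) * (v + 3 * b * u - 16 * b * (b + 1)) with hC
  set Q : K := v + (3 * b + 4) * u - 16 * b * (b + 1) with hQ
  set X : K := c * (2 * v) with hX
  set Z : K := z * (2 * v) with hZ
  have key : (2 * v) ^ 3 * (b * (b + 1) * (b + 2) * z ^ 3 + 3 * b * c * (b + 1) * z ^ 2
      + 3 * b * c * (c + 1) * z + c * (c + 1) * (c + 2)) = 0 := by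
    linear_combination
      (3 * b * (b + 1) * Z ^ 2 + 3 * b * Z * (X + C + 2 * v) + X ^ 2 + X * C + C ^ 2
        + 6 * v * (X + C) + 8 * v ^ 2) * hc
      + (b * (b + 1) * (b + 2) * (Z ^ 2 + Z * Q + Q ^ 2) + 3 * b * (b + 1) * C * (Z + Q)
        + 3 * b * C * (C + 2 * v)) * hz
      + (-64 * b * (b + 1) * (b + 2)) * hE
  have h8 : ((2 : K) * v) ^ 3 ≠ 0 := pow_ne_zero _ h2v
  exact (mul_eq_zero.mp key).resolve_left h8
end

section
/- Let K be a field of characteristic 0 and let b, c, z ∈ K with b ∉ {0, −1, −2}. Suppose S(b,c,z) = 0 and W := bc + (b+2)(3bz + 2c + 2) ≠ 0. Define u = 16b(b+1)(bz + 2z + c)/W and v = 32b(b+1)(b+2)/W. Then v² = u³ + b²(3u − 16b − 16)²; that is, (u,v) is a point on the elliptic curve E₃, and this map is inverse to the parametrization c = −(b+2)(v+3bu−16b(b+1))/(2v), z = (v+(3b+4)u−16b(b+1))/(2v). -/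
set_option maxRecDepth 8000
set_option maxHeartbeats 2000000


/-- The inverse map: a point `(c, z)` on the genus-1 curve `S(b,c,z) = 0` (with fixed
`b ∉ {0,-1,-2}`) is sent to a point `(u, v)` of the elliptic curve
`E₃ : v² = u³ + b²(3u - 16b - 16)²`, and this is inverse to the parametrization
`c = -(b+2)(v + 3bu - 16b(b+1))/(2v)`, `z = (v + (3b+4)u - 16b(b+1))/(2v)`. -/
theorem stmt_14 {K : Type*} [Field K] [CharZero K] (b c z : K)
    (hb0 : b ≠ 0) (hb1 : b ≠ -1) (hb2 : b ≠ -2)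
    (hS : b * (b + 1) * (b + 2) * z ^ 3 + 3 * b * c * (b + 1) * z ^ 2
      + 3 * b * c * (c + 1) * z + c * (c + 1) * (c + 2) = 0)
    (hW : b * c + (b + 2) * (3 * b * z + 2 * c + 2) ≠ 0)
    (u v : K)
    (hu : u = 16 * b * (b + 1) * (b * z + 2 * z + c) /
      (b * c + (b + 2) * (3 * b * z + 2 * c + 2)))
    (hv : v = 32 * b * (b + 1) * (b + 2) /
      (b * c + (b + 2) * (3 * b * z + 2 * c + 2))) :
    v ^ 2 = u ^ 3 + b ^ 2 * (3 * u - 16 * b - 16) ^ 2 ∧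
      c = -(b + 2) * (v + 3 * b * u - 16 * b * (b + 1)) / (2 * v) ∧
      z = (v + (3 * b + 4) * u - 16 * b * (b + 1)) / (2 * v) := by
  have hb1' : b + 1 ≠ 0 := fun h => hb1 (by linear_combination h)
  have hb2' : b + 2 ≠ 0 := fun h => hb2 (by linear_combination h)
  have hvne : v ≠ 0 := by
    rw [hv]
    exact div_ne_zero (by
      apply mul_ne_zero (mul_ne_zero (mul_ne_zero (by norm_num) hb0) hb1') hb2') hW
  subst hu hv
  refine ⟨?_, ?_, ?_⟩
  · have h1 : b * c + (b + 2) * (b * 3 * z + 2 * c + 2) ≠ 0 := by convert hW using 3; ring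
    field_simp
    linear_combination (-4096 * (b + 1) ^ 2 * (b + 2) ^ 2) * hS
  · rw [eq_div_iff (by simpa using hvne)]
    have h1 : c * b + (b + 2) * (b * 3 * z + c * 2 + 2) ≠ 0 := by convert hW using 1; ring
    field_simp
    ring
  · rw [eq_div_iff (by simpa using hvne)]
    have h1 : b * c + (b + 2) * (z * b * 3 + 2 * c + 2) ≠ 0 := by convert hW using 1; ring
    field_simp
    ring
end

section
/- Let K = ℚ(b) be the field of rational functions in one variable b over ℚ, and let E₃ be the elliptic curve over K in Weierstrass form y² = x³ + 9b²x² − 96b²(b+1)x + 256b²(b+1)² (the expansion of y² = x³ + b²(3x − 16b − 16)²). Then the point T = (0, 16b(b+1)) lies on E₃ and is a point of exact order 3 in the group of K-rational points: T ≠ O and T + T + T = O (equivalently, T + T = (0, −16b(b+1))). Moreover, the point (8b, 8b(b+2)) also lies on E₃. -/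
open WeierstrassCurve

/-- The elliptic curve `E₃` over `ℚ(b)` in Weierstrass form
`y² = x³ + 9b²x² - 96b²(b+1)x + 256b²(b+1)²`, the expansion of
`y² = x³ + b²(3x - 16b - 16)²`. Here `b` is the generator `RatFunc.X` of `ℚ(b)`. -/
noncomputable def E₃ : WeierstrassCurve.Affine (RatFunc ℚ) :=
  { a₁ := 0
    a₂ := 9 * RatFunc.X ^ 2
    a₃ := 0
    a₄ := -96 * RatFunc.X ^ 2 * (RatFunc.X + 1)
    a₆ := 256 * RatFunc.X ^ 2 * (RatFunc.X + 1) ^ 2 }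

lemma hb : (RatFunc.X : RatFunc ℚ) ≠ 0 := RatFunc.X_ne_zero

lemma h32 : (32 : RatFunc ℚ) ≠ 0 := by
  rw [← map_ofNat (algebraMap (Polynomial ℚ) (RatFunc ℚ)) 32]
  exact RatFunc.algebraMap_ne_zero (by norm_num)

lemma hb1 : (RatFunc.X : RatFunc ℚ) + 1 ≠ 0 := by
  rw [← RatFunc.algebraMap_X (K := ℚ), ← map_one (algebraMap (Polynomial ℚ) (RatFunc ℚ)),
    ← map_add]
  apply RatFunc.algebraMap_ne_zero
  intro h
  simpa using congrArg (Polynomial.eval 0) h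

lemma hprod : (32 : RatFunc ℚ) * RatFunc.X * (RatFunc.X + 1) ≠ 0 :=
  mul_ne_zero (mul_ne_zero h32 hb) hb1

lemma hyne : (16 * RatFunc.X * (RatFunc.X + 1) : RatFunc ℚ) ≠
    E₃.negY 0 (16 * RatFunc.X * (RatFunc.X + 1)) := by
  simp only [WeierstrassCurve.Affine.negY, E₃, mul_zero, sub_zero]
  intro h
  exact hprod (by linear_combination h)

lemma hT : E₃.Nonsingular 0 (16 * RatFunc.X * (RatFunc.X + 1)) := by
  rw [WeierstrassCurve.Affine.nonsingular_iff]
  constructor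
  · rw [WeierstrassCurve.Affine.equation_iff]
    simp only [E₃]
    ring
  · right
    exact hyne

open Classical in
/-- The point `(0, 16b(b+1))` is a nonsingular point of exact order 3 on `E₃`, and
`(8b, 8b(b+2))` also lies on `E₃`. -/
theorem stmt_15 :
    ∃ h : E₃.Nonsingular 0 (16 * RatFunc.X * (RatFunc.X + 1)),
      Affine.Point.some _ _ h ≠ 0 ∧
      Affine.Point.some _ _ h + Affine.Point.some _ _ h + Affine.Point.some _ _ h = 0 ∧
      E₃.Equation (8 * RatFunc.X) (8 * RatFunc.X * (RatFunc.X + 2)) := by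
  refine ⟨hT, Affine.Point.some_ne_zero hT, ?_, ?_⟩
  · rw [Affine.Point.add_self_of_Y_ne hyne]
    have hL : E₃.slope 0 0 (16 * RatFunc.X * (RatFunc.X + 1)) (16 * RatFunc.X * (RatFunc.X + 1))
        = -3 * RatFunc.X := by
      rw [Affine.slope_of_Y_ne rfl hyne]
      simp only [E₃, WeierstrassCurve.Affine.negY, mul_zero, sub_zero]
      rw [div_eq_iff (fun h => hprod (by linear_combination h))]
      ring
    apply Affine.Point.add_of_Y_eq
    · rw [hL]; simp only [E₃, WeierstrassCurve.Affine.addX]; ring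
    · rw [hL]
      simp only [E₃, WeierstrassCurve.Affine.addY, WeierstrassCurve.Affine.negAddY,
        WeierstrassCurve.Affine.addX, WeierstrassCurve.Affine.negY]
      ring
  · rw [WeierstrassCurve.Affine.equation_iff]
    simp only [E₃]
    ring
end

section
/- Let K be a field of characteristic 0 and let b, c, z ∈ K satisfy the quartic hypergeometric equation T(b,c,z) = 0, where T(b,c,z) = ((bz+c)² + 3bz² + 3c)² + 2(bz²+c)² + 8bcz(z−1)² + 6(bz⁴+c). Assume c(b+c+3) ≠ 0. Define u = −6b(b+1)(b+2)(bz+c+3z)² / (c(b+c+3)) and v = 12b(b+1)(b+2)(b+3)(bz+c+3z)(2bz+2c+3) / (c(b+c+3)). Then v² = u(u² − 4b(5b+9)u + 108b(b+1)²(b+2)); that is, (u,v) is a point on the elliptic curve E₄*: v² = u(u² − 4b(5b+9)u + 108b(b+1)²(b+2)). -/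
set_option maxRecDepth 100000 in
set_option maxHeartbeats 1000000 in
/-- Projection of the quartic hypergeometric surface `S₄ : T(b,c,z) = 0` (for fixed `b`)
onto the elliptic curve `E₄* : v² = u(u² - 4b(5b+9)u + 108b(b+1)²(b+2))`. -/
theorem stmt_17 {K : Type*} [Field K] [CharZero K] (b c z : K)
    (hT : ((b * z + c) ^ 2 + 3 * b * z ^ 2 + 3 * c) ^ 2 + 2 * (b * z ^ 2 + c) ^ 2
      + 8 * b * c * z * (z - 1) ^ 2 + 6 * (b * z ^ 4 + c) = 0)
    (hcb : c * (b + c + 3) ≠ 0)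
    (u v : K)
    (hu : u = -6 * b * (b + 1) * (b + 2) * (b * z + c + 3 * z) ^ 2 / (c * (b + c + 3)))
    (hv : v = 12 * b * (b + 1) * (b + 2) * (b + 3) * (b * z + c + 3 * z) * (2 * b * z + 2 * c + 3)
      / (c * (b + c + 3))) :
    v ^ 2 = u * (u ^ 2 - 4 * b * (5 * b + 9) * u + 108 * b * (b + 1) ^ 2 * (b + 2)) := by
  have hu' : u * (c * (b + c + 3)) = -6 * b * (b + 1) * (b + 2) * (b * z + c + 3 * z) ^ 2 := by
    rw [hu, div_mul_cancel₀ _ hcb]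
  have hv' : v * (c * (b + c + 3)) = 12 * b * (b + 1) * (b + 2) * (b + 3) * (b * z + c + 3 * z)
      * (2 * b * z + 2 * c + 3) := by
    rw [hv, div_mul_cancel₀ _ hcb]
  have key : (v * (c * (b + c + 3))) ^ 2 * (c * (b + c + 3))
      = (u * (c * (b + c + 3))) ^ 3
        - 4 * b * (5 * b + 9) * (u * (c * (b + c + 3))) ^ 2 * (c * (b + c + 3))
        + 108 * b * (b + 1) ^ 2 * (b + 2) * (u * (c * (b + c + 3))) * (c * (b + c + 3)) ^ 2 := by
    rw [hu', hv']
    linear_combination ((209952)*b^2*z^2 + (139968)*b^2*c*z + (23328)*b^2*c^2 + (979776)*b^3*z^2 + (606528)*b^3*c*z + (93312)*b^3*c^2 + (1965384)*b^4*z^2 + (1108080)*b^4*c*z + (153576)*b^4*c^2 + (2229768)*b^5*z^2 + (1117152)*b^5*c*z + (135000)*b^5*c^2 + (1581768)*b^6*z^2 + (682128)*b^6*c*z + (68688)*b^6*c^2 + (729864)*b^7*z^2 + (259200)*b^7*c*z + (20304)*b^7*c^2 + (219672)*b^8*z^2 + (60048)*b^8*c*z + (3240)*b^8*c^2 + (41688)*b^9*z^2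 + (7776)*b^9*c*z + (216)*b^9*c^2 + (4536)*b^10*z^2 + (432)*b^10*c*z + (216)*b^11*z^2) * hT
  apply mul_right_cancel₀ (pow_ne_zero 3 hcb)
  linear_combination key
end
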